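/- arXiv:1903.00370 — 12 statements merged into one kernel-verified Lean document; each statement's English description precedes it below -/
import Mathlib

section
/- Every p-compact operator between two lattice-normed spaces is p-bounded; that is, if T : (E,p,V) → (F,q,W) is linear and for every p-bounded net (x_α) in E there is a subnet (x_{φ(β)}) such that (T x_{φ(β)}) q-converges to some y ∈ F, then T maps p-bounded subsets of E to q-bounded subsets of F. -/
open Filter MeasureTheory Set

/-- A nonempty, upward-directed index preorder (the index set of a net). -/
def IsDirectedIx (A : Type) [Preorder A] : Prop :=
  Nonempty A ∧ ∀ a b : A, ∃ c : A, a ≤ c ∧ b ≤ c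

/-- `φ : B → A` is a (Kelley) subnet selection map: monotone and cofinal. -/
def IsSubnet {A B : Type} [Preorder A] [Preorder B] (φ : B → A) : Prop :=
  Monotone φ ∧ ∀ a : A, ∃ b : B, a ≤ φ b

/-- `p : E → V` is a vector ("lattice") norm with values in the vector lattice `V`. -/
def IsVectorNorm {E V : Type} [AddCommGroup E] [Module ℝ E]
    [AddCommGroup V] [Lattice V] [Module ℝ V] (p : E → V) : Prop :=
  (∀ x, 0 ≤ p x) ∧ (∀ x, p x = 0 ↔ x = 0) ∧
  (∀ x y, p (x + y) ≤ p x + p y) ∧ (∀ (c : ℝ) (x : E), p (c • x) = |c| • p x)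

/-- `q`-convergence of the net `y` to `z` in a lattice-normed space `(E, q, V)`:
there is a decreasing net `e` in `V` with infimum `0` dominating `q (y α - z)` eventually. -/
def QConvNet {A E V : Type} [Preorder A] [AddCommGroup E]
    [AddCommGroup V] [Lattice V] (q : E → V) (y : A → E) (z : E) : Prop :=
  ∃ (Γ : Type) (_ : Preorder Γ), IsDirectedIx Γ ∧
    ∃ e : Γ → V, Antitone e ∧ IsGLB (Set.range e) 0 ∧
      ∀ γ : Γ, ∃ α₀ : A, ∀ α ≥ α₀, q (y α - z) ≤ e γ

/-- Relatively uniform `q`-convergence of the net `y` to `z`. -/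
def RUConvNet {A E V : Type} [Preorder A] [AddCommGroup E]
    [AddCommGroup V] [Lattice V] [Module ℝ V] (q : E → V) (y : A → E) (z : E) : Prop :=
  ∃ e : V, 0 ≤ e ∧ ∀ ε : ℝ, 0 < ε → ∃ α₀ : A, ∀ α ≥ α₀, q (y α - z) ≤ ε • e

/-- Order convergence of a net in a vector lattice. -/
def OConvNet {A G : Type} [Preorder A] [Lattice G] [AddCommGroup G]
    (f : A → G) (l : G) : Prop :=
  ∃ (Γ : Type) (_ : Preorder Γ), IsDirectedIx Γ ∧
    ∃ g : Γ → G, Antitone g ∧ IsGLB (Set.range g) 0 ∧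
      ∀ γ : Γ, ∃ α₀ : A, ∀ α ≥ α₀, |f α - l| ≤ g γ

/-- Unbounded order convergence of a net in a vector lattice. -/
def UOConvNet {A G : Type} [Preorder A] [Lattice G] [AddCommGroup G]
    (f : A → G) (l : G) : Prop :=
  ∀ h : G, 0 ≤ h → OConvNet (fun α => |f α - l| ⊓ h) 0

/-- Order convergence of a net computed inside the sublattice `S` of `G`:
the limit and the dominating decreasing net lie in `S`, and the dominating net
has infimum `0` relative to `S`. -/
def OConvNetIn {A G : Type} [Preorder A] [Lattice G] [AddCommGroup G]
    (S : Set G) (f : A → G) (l : G) : Prop :=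
  l ∈ S ∧ ∃ (Γ : Type) (_ : Preorder Γ), IsDirectedIx Γ ∧
    ∃ g : Γ → G, (∀ γ, g γ ∈ S) ∧ Antitone g ∧ (∀ γ, 0 ≤ g γ) ∧
      (∀ w ∈ S, (∀ γ, w ≤ g γ) → w ≤ 0) ∧
      ∀ γ : Γ, ∃ α₀ : A, ∀ α ≥ α₀, |f α - l| ≤ g γ

/-- Order convergence of a sequence inside the sublattice `S`. -/
def OConvSeqIn {G : Type} [Lattice G] [AddCommGroup G]
    (S : Set G) (f : ℕ → G) (l : G) : Prop :=
  OConvNetIn S f l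

/-- The Riesz space of bounded real functions on `ℝ` with countable support. -/
def Fspace : Set (ℝ → ℝ) :=
  {f | (∃ C : ℝ, ∀ x, |f x| ≤ C) ∧ Set.Countable {x | f x ≠ 0}}

/-- `E = ℝ·1 ⊕ F`: functions that are a constant plus a bounded function with
countable support. -/
def Espace : Set (ℝ → ℝ) :=
  {g | ∃ (c : ℝ) (f : ℝ → ℝ), f ∈ Fspace ∧ g = fun x => c + f x}

/-- **Theorem (p-compact ⇒ p-bounded).** Every `p`-compact linear operator
`T : (E,p,V) → (F,q,W)` between lattice-normed spaces (with `V`, `W` Archimedean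
vector lattices) maps `p`-bounded sets to `q`-bounded sets. -/
theorem pCompact_pBounded {E V F W : Type}
    [AddCommGroup E] [Module ℝ E]
    [AddCommGroup V] [Lattice V] [Module ℝ V]
    [CovariantClass V V (· + ·) (· ≤ ·)]
    [AddCommGroup W] [Lattice W] [Module ℝ W]
    [CovariantClass W W (· + ·) (· ≤ ·)]
    (hArchV : ∀ u v : V, (∀ n : ℕ, (n : ℝ) • u ≤ v) → u ≤ 0)
    (hArchW : ∀ u v : W, (∀ n : ℕ, (n : ℝ) • u ≤ v) → u ≤ 0)
    (p : E → V) (q : F → W) [AddCommGroup F] [Module ℝ F]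
    (hp : IsVectorNorm p) (hq : IsVectorNorm q)
    (T : E →ₗ[ℝ] F)
    (hcompact : ∀ (A : Type) (_ : Preorder A), IsDirectedIx A →
      ∀ x : A → E, (∃ e : V, ∀ α : A, p (x α) ≤ e) →
        ∃ (B : Type) (_ : Preorder B), IsDirectedIx B ∧
          ∃ φ : B → A, IsSubnet φ ∧
            ∃ y : F, QConvNet q (fun β => T (x (φ β))) y)
    (M : Set E) (hM : ∃ e : V, 0 ≤ e ∧ ∀ x ∈ M, p x ≤ e) :
    ∃ w : W, 0 ≤ w ∧ ∀ x ∈ M, q (T x) ≤ w := by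
  by_contra hcon
  push_neg at hcon
  -- index set: positive cone of W
  have h' : ∀ w : {w : W // 0 ≤ w}, ∃ x, x ∈ M ∧ ¬ q (T x) ≤ w.1 := by
    intro w
    obtain ⟨x, hxM, hx⟩ := hcon w.1 w.2
    exact ⟨x, hxM, hx⟩
  choose x hxM hxq using h'
  obtain ⟨e, _, he⟩ := hM
  have hdir : IsDirectedIx {w : W // 0 ≤ w} := by
    refine ⟨⟨⟨0, le_refl 0⟩⟩, fun a b => ?_⟩
    exact ⟨⟨a.1 ⊔ b.1, le_trans a.2 le_sup_left⟩, le_sup_left, le_sup_right⟩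
  obtain ⟨B, instB, hB, φ, hφ, y, hconv⟩ :=
    hcompact {w : W // 0 ≤ w} inferInstance hdir x ⟨e, fun α => he _ (hxM α)⟩
  obtain ⟨Γ, instΓ, hΓ, g, hganti, hgglb, hgconv⟩ := hconv
  obtain ⟨γ₀⟩ := hΓ.1
  obtain ⟨β₀, hβ₀⟩ := hgconv γ₀
  set w' : W := (g γ₀ + q y) ⊔ 0 with hw'
  obtain ⟨b, hb⟩ := hφ.2 ⟨w', le_sup_right⟩
  obtain ⟨β, hβb, hββ₀⟩ := hB.2 b β₀
  have hqb : q (T (x (φ β))) ≤ (φ β).1 := by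
    have h1 : q (T (x (φ β))) ≤ q (T (x (φ β)) - y) + q y := by
      calc q (T (x (φ β))) = q ((T (x (φ β)) - y) + y) := by rw [sub_add_cancel]
        _ ≤ q (T (x (φ β)) - y) + q y := hq.2.2.1 _ _
    have h2 : q (T (x (φ β)) - y) ≤ g γ₀ := hβ₀ β hββ₀
    have h3 : q (T (x (φ β))) ≤ w' :=
      le_trans (le_trans h1 (add_le_add_left h2 _)) le_sup_left
    have h4 : (⟨w', le_sup_right⟩ : {w : W // 0 ≤ w}) ≤ φ β :=
      le_trans hb (hφ.1 hβb)
    exact le_trans h3 h4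
  exact hxq (φ β) hqb
end

section
/- Let F be the Riesz space of all bounded real-valued functions on ℝ with countable support, and let E = ℝ·1 ⊕ F, where 1 is the constant function 1. Then E is a regular vector sublattice of ℝ^ℝ: if a net (g_α) in E satisfies g_α ↓ 0 in E, then g_α ↓ 0 in ℝ^ℝ. -/
open Filter MeasureTheory Set

/-- **Lemma (regularity).** `E = ℝ·1 ⊕ F` is a regular sublattice of `ℝ^ℝ`:
if a net in `E` decreases to `0` in `E`, then its infimum in `ℝ^ℝ` is `0`. -/
theorem Espace_regular {A : Type} [Preorder A] (hA : IsDirectedIx A)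
    (g : A → (ℝ → ℝ)) (hmem : ∀ α, g α ∈ Espace)
    (hanti : Antitone g) (hpos : ∀ α, 0 ≤ g α)
    (hinfE : ∀ h ∈ Espace, (∀ α, h ≤ g α) → h ≤ 0) :
    IsGLB (Set.range g) 0 := by
  constructor
  · rintro _ ⟨α, rfl⟩
    exact hpos α
  · rintro h hlb
    intro x
    -- one-point function: max (h x) 0 at x, 0 elsewhere
    set v : ℝ := h x ⊔ 0 with hv
    have hmemE : (fun y => if y = x then v else 0) ∈ Espace := by
      refine ⟨0, fun y => if y = x then v else 0, ⟨⟨|v|, fun y => ?_⟩, ?_⟩, by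
        funext y; simp⟩
      · by_cases hy : y = x <;> simp [hy, le_abs_self, abs_nonneg]
      · exact (Set.countable_singleton x).mono (by
          intro y hy
          by_contra hne
          simp only [Set.mem_setOf_eq] at hy
          exact hy (by simp [Set.mem_singleton_iff] at hne; simp [hne]))
    have hle : ∀ α, (fun y => if y = x then v else 0) ≤ g α := by
      intro α y
      by_cases hy : y = x
      · subst hy
        have h1 : h y ≤ g α y := hlb ⟨α, rfl⟩ y
        have h2 : (0 : ℝ) ≤ g α y := hpos α y
        simp [hv, sup_le_iff, h1, h2]
      · simpa [hy] using hpos α y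
    have := hinfE _ hmemE hle x
    simp only [if_pos rfl] at this
    have : h x ⊔ 0 ≤ (0 : ℝ) := this
    exact le_trans le_sup_left this
end

section
/- Let F be the Riesz space of bounded real-valued functions on ℝ with countable support and E = ℝ·1 ⊕ F ⊆ ℝ^ℝ. Then E is Dedekind σ-complete: every order bounded sequence in E has a supremum in E. -/
open Filter MeasureTheory Set

/-- **Lemma.** `E = ℝ·1 ⊕ F` is Dedekind `σ`-complete: every order bounded
sequence in `E` has a supremum in `E`. -/
theorem Espace_sigma_DedekindComplete
    (g : ℕ → (ℝ → ℝ)) (hmem : ∀ n, g n ∈ Espace)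
    (hbdd : ∃ b ∈ Espace, ∀ n, g n ≤ b) :
    ∃ s ∈ Espace, (∀ n, g n ≤ s) ∧ ∀ b ∈ Espace, (∀ n, g n ≤ b) → s ≤ b := by
  obtain ⟨b, ⟨cb, fb, ⟨⟨Cb, hCb⟩, hfbc⟩, hbdef⟩, hb⟩ := hbdd
  choose c f hf hg using hmem
  choose C hC using fun n => (hf n).1
  set S : Set ℝ := {x | fb x ≠ 0} ∪ ⋃ n, {x | f n x ≠ 0} with hSdef
  have hScount : S.Countable := hfbc.union (Set.countable_iUnion fun n => (hf n).2)
  obtain ⟨x0, hx0⟩ : ∃ x, x ∉ S := by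
    by_contra h; push_neg at h
    exact Cardinal.not_countable_real
      (by rw [Set.eq_univ_iff_forall.2 h] at hScount; exact hScount)
  have hfnot : ∀ x ∉ S, ∀ n, f n x = 0 := by
    intro x hx n; by_contra h
    exact hx (Or.inr (Set.mem_iUnion.2 ⟨n, h⟩))
  have hfbx0 : fb x0 = 0 := by by_contra h; exact hx0 (Or.inl h)
  have hcb : ∀ n, c n ≤ cb := by
    intro n
    have := hb n x0
    rw [hg n, hbdef] at this
    simpa [hfnot x0 hx0 n, hfbx0] using this
  have hbdda : ∀ x, BddAbove (Set.range fun n => g n x) := fun x =>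
    ⟨b x, by rintro _ ⟨n, rfl⟩; exact hb n x⟩
  set s : ℝ → ℝ := fun x => ⨆ n, g n x with hsdef
  have hub : ∀ n, g n ≤ s := fun n x => le_ciSup (hbdda x) n
  have hlub : ∀ b', (∀ n, g n ≤ b') → s ≤ b' := fun b' h x => ciSup_le fun n => h n x
  set cs : ℝ := ⨆ n, c n with hcsdef
  have hcbdd : BddAbove (Set.range c) := ⟨cb, by rintro _ ⟨n, rfl⟩; exact hcb n⟩
  have hsx : ∀ x ∉ S, s x = cs := by
    intro x hx
    have h1 : (fun n => g n x) = c := funext fun n => by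
      rw [hg n]; simp [hfnot x hx n]
    simp only [hsdef, h1, hcsdef]
  -- bounds on s
  have hsub : ∀ x, s x ≤ cb + Cb := fun x => by
    have h1 : s x ≤ b x := hlub b hb x
    have h2 : fb x ≤ Cb := (abs_le.1 (hCb x)).2
    rw [hbdef] at h1; dsimp at h1; linarith
  have hslb : ∀ x, c 0 - C 0 ≤ s x := fun x => by
    have h1 : g 0 x ≤ s x := hub 0 x
    have h2 : -C 0 ≤ f 0 x := (abs_le.1 (hC 0 x)).1
    rw [hg 0] at h1; dsimp only at h1; linarith
  set fs : ℝ → ℝ := fun x => s x - cs with hfsdef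
  have hfsb : ∀ x, |fs x| ≤ max (cs - (c 0 - C 0)) (cb + Cb - cs) := fun x => by
    have h1 := hsub x
    have h2 := hslb x
    have h3 := le_max_left (cs - (c 0 - C 0)) (cb + Cb - cs)
    have h4 := le_max_right (cs - (c 0 - C 0)) (cb + Cb - cs)
    rw [abs_le]; constructor <;> simp only [hfsdef] <;> linarith
  have hfsc : Set.Countable {x | fs x ≠ 0} := by
    refine hScount.mono fun x hx => ?_
    by_contra h
    exact hx (by simp only [hfsdef, Set.mem_setOf_eq, hsx x h, sub_self, ne_eq,
      not_true_eq_false] at hx)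
  refine ⟨s, ⟨cs, fs, ⟨⟨_, hfsb⟩, hfsc⟩, funext fun x => by simp [hfsdef]⟩, hub, fun b' _ h => hlub b' h⟩
end

section
/- Let F be the Riesz space of bounded real functions on ℝ with countable support, E = ℝ·1 ⊕ F, and T : E → F the projection with range F and kernel ℝ·1 (T(λ·1 + f) = f). Then T is not order bounded: the image under T of the order bounded set {1_{{x}} : x ∈ [0,1]} ⊆ E is not order bounded in F. -/
open Filter MeasureTheory Set

/-- **Example.** The projection `T : E = ℝ·1 ⊕ F → F` along `ℝ·1` is not order
bounded: the set `{1_{{x}} : x ∈ [0,1]}` is order bounded in `E` (by `1`), but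
its image under `T` has no upper bound in `F`. -/
theorem projection_not_orderBounded
    (T : (ℝ → ℝ) → (ℝ → ℝ))
    (hT : ∀ (c : ℝ) (f : ℝ → ℝ), f ∈ Fspace → T ((fun _ => c) + f) = f) :
    (∀ x ∈ Set.Icc (0:ℝ) 1,
      (fun t => if t = x then (1:ℝ) else 0) ∈ Espace ∧
      |fun t => if t = x then (1:ℝ) else 0| ≤ fun _ => (1:ℝ)) ∧
    ¬ ∃ b ∈ Fspace, ∀ x ∈ Set.Icc (0:ℝ) 1,
        T (fun t => if t = x then (1:ℝ) else 0) ≤ b := by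
  have hind : ∀ x : ℝ, (fun t => if t = x then (1:ℝ) else 0) ∈ Fspace := by
    intro x
    constructor
    · exact ⟨1, fun t => by by_cases h : t = x <;> simp [h]⟩
    · apply Set.Countable.mono _ (Set.countable_singleton x)
      intro t ht
      simp only [Set.mem_setOf_eq] at ht
      by_cases h : t = x
      · exact h
      · simp [h] at ht
  have hTind : ∀ x : ℝ, T (fun t => if t = x then (1:ℝ) else 0)
      = fun t => if t = x then (1:ℝ) else 0 := by
    intro x
    have := hT 0 (fun t => if t = x then (1:ℝ) else 0) (hind x)
    have heq : ((fun _ => (0:ℝ)) + fun t => if t = x then (1:ℝ) else 0)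
        = fun t => if t = x then (1:ℝ) else 0 := by
      funext t; simp
    rwa [heq] at this
  constructor
  · intro x _
    refine ⟨⟨0, (fun t => if t = x then (1:ℝ) else 0), hind x, by funext t; simp⟩, ?_⟩
    intro t
    by_cases h : t = x <;> simp [abs_of_nonneg, h, Pi.abs_apply]
  · rintro ⟨b, hb, hball⟩
    have hsub : Set.Icc (0:ℝ) 1 ⊆ {x | b x ≠ 0} := by
      intro x hx
      have h1 := hball x hx
      rw [hTind x] at h1
      have h2 := h1 x
      simp only [if_pos rfl] at h2
      intro h0
      rw [h0] at h2
      exact absurd h2 (by norm_num)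
    have hcnt : (Set.Icc (0:ℝ) 1).Countable := hb.2.mono hsub
    have h1 := Cardinal.mk_Icc_real (zero_lt_one (α := ℝ))
    have h2 := hcnt.le_aleph0
    rw [h1] at h2
    exact absurd h2 (Cardinal.aleph0_lt_continuum.not_ge)
end

section
/- Let F be the Riesz space of bounded real functions on ℝ with countable support, E = ℝ·1 ⊕ F, and T : E → F the projection onto F along ℝ·1. Then T is sequentially order compact: for every order bounded sequence (f_n) in E there is a subsequence (f_{n_k}) such that (T f_{n_k}) order converges in F. -/
open Filter MeasureTheory Set
open Topology

/-- **Example.** The projection `T : E = ℝ·1 ⊕ F → F` along `ℝ·1` is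
sequentially order compact: every order bounded sequence in `E` has a
subsequence whose image under `T` order converges in `F`. -/
theorem projection_sequentially_order_compact
    (T : (ℝ → ℝ) → (ℝ → ℝ))
    (hT : ∀ (c : ℝ) (f : ℝ → ℝ), f ∈ Fspace → T ((fun _ => c) + f) = f)
    (f : ℕ → (ℝ → ℝ)) (hf : ∀ n, f n ∈ Espace)
    (hbdd : ∃ b ∈ Espace, ∀ n, |f n| ≤ b) :
    ∃ φ : ℕ → ℕ, StrictMono φ ∧
      ∃ l : ℝ → ℝ, OConvSeqIn Fspace (fun k => T (f (φ k))) l := by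

  classical
  choose c g hg hfg using hf
  obtain ⟨b, hbE, hble⟩ := hbdd
  obtain ⟨cb, h, ⟨⟨Ch, hCh⟩, hhc⟩, hb⟩ := hbE
  -- the common countable "support" set
  set A : Set ℝ := (⋃ n, {x | g n x ≠ 0}) ∪ {x | h x ≠ 0} with hA
  have hAc : A.Countable :=
    (Set.countable_iUnion (fun n => (hg n).2)).union hhc
  have hgA : ∀ n x, x ∉ A → g n x = 0 := by
    intro n x hx
    by_contra hne
    exact hx (Or.inl (Set.mem_iUnion.2 ⟨n, hne⟩))
  have hx0 : ∃ x0, x0 ∉ A := by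
    by_contra hc
    push_neg at hc
    exact Cardinal.not_countable_real ((Set.eq_univ_of_forall hc ▸ hAc))
  obtain ⟨x0, hx0⟩ := hx0
  have hhx0 : h x0 = 0 := by
    by_contra hne; exact hx0 (Or.inr hne)
  -- pointwise bounds
  have habs : ∀ n x, |f n x| ≤ b x := by
    intro n x
    have := hble n x
    simpa using this
  have hcbound : ∀ n, |c n| ≤ cb := by
    intro n
    have h1 : |f n x0| ≤ b x0 := habs n x0
    have h2 : f n x0 = c n := by
      rw [hfg n]; simp [hgA n x0 hx0]
    have h3 : b x0 = cb := by rw [hb]; simp [hhx0]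
    rw [h2, h3] at h1; exact h1
  set M : ℝ := cb + (cb + Ch) with hM
  have hgM : ∀ n x, |g n x| ≤ M := by
    intro n x
    have h1 : g n x = f n x - c n := by rw [hfg n]; ring
    have h2 : b x ≤ cb + Ch := by
      rw [hb]
      have := (abs_le.mp (hCh x)).2
      show cb + h x ≤ cb + Ch
      linarith
    calc |g n x| = |f n x - c n| := by rw [h1]
      _ ≤ |f n x| + |c n| := abs_sub _ _
      _ ≤ b x + cb := add_le_add (habs n x) (hcbound n)
      _ ≤ (cb + Ch) + cb := by linarith
      _ = M := by ring
  have hM0 : (0:ℝ) ≤ M := le_trans (abs_nonneg _) (hgM 0 x0)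
  -- extract a pointwise convergent subsequence on A
  haveI : Countable A := hAc.to_subtype
  have hK : IsCompact (Set.univ.pi (fun _ : A => Set.Icc (-M:ℝ) M)) :=
    isCompact_univ_pi (fun _ => isCompact_Icc)
  have hu : ∀ n, (fun a : A => g n a) ∈ Set.univ.pi (fun _ : A => Set.Icc (-M:ℝ) M) := by
    intro n a _
    exact abs_le.mp (hgM n a)
  obtain ⟨v, hv, φ, hφ, hconv⟩ := hK.tendsto_subseq hu
  have hpt : ∀ a : A, Tendsto (fun k => g (φ k) a) atTop (𝓝 (v a)) :=
    fun a => tendsto_pi_nhds.mp hconv a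
  set l : ℝ → ℝ := fun x => if hx : x ∈ A then v ⟨x, hx⟩ else 0 with hl
  have hlt : ∀ x, Tendsto (fun k => g (φ k) x) atTop (𝓝 (l x)) := by
    intro x
    by_cases hx : x ∈ A
    · simpa [hl, hx] using hpt ⟨x, hx⟩
    · have h0 : ∀ k, g (φ k) x = 0 := fun k => hgA _ x hx
      simp only [hl, dif_neg hx, h0]
      exact tendsto_const_nhds
  have hlM : ∀ x, |l x| ≤ M := by
    intro x
    by_cases hx : x ∈ A
    · have := hv ⟨x, hx⟩ (Set.mem_univ _)
      simp only [hl, dif_pos hx]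
      exact abs_le.mpr this
    · simp [hl, dif_neg hx, hM0]
  have hlA : ∀ x, x ∉ A → l x = 0 := by
    intro x hx; simp [hl, dif_neg hx]
  have hlF : l ∈ Fspace := by
    refine ⟨⟨M, hlM⟩, hAc.mono ?_⟩
    intro x hx
    by_contra hxa
    exact hx (hlA x hxa)
  -- identify T on the sequence
  have hTf : ∀ n, T (f n) = g n := by
    intro n
    have heq : ((fun _ => c n) + g n : ℝ → ℝ) = f n := by
      rw [hfg n]; rfl
    rw [← heq]
    exact hT (c n) (g n) (hg n)
  -- the dominating antitone sequence
  have hbddR : ∀ (m : ℕ) (x : ℝ),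
      BddAbove (Set.range fun k : ℕ => |g (φ (m + k)) x - l x|) := by
    intro m x
    refine ⟨M + M, ?_⟩
    rintro _ ⟨k, rfl⟩
    calc |g (φ (m + k)) x - l x| ≤ |g (φ (m + k)) x| + |l x| := abs_sub _ _
      _ ≤ M + M := add_le_add (hgM _ x) (hlM x)
  set G : ℕ → ℝ → ℝ := fun m x => ⨆ k : ℕ, |g (φ (m + k)) x - l x| with hG
  have hG0 : ∀ m x, 0 ≤ G m x := by
    intro m x
    exact le_trans (abs_nonneg _) (le_ciSup (hbddR m x) 0)
  have hGM : ∀ m x, G m x ≤ M + M := by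
    intro m x
    refine ciSup_le fun k => ?_
    calc |g (φ (m + k)) x - l x| ≤ |g (φ (m + k)) x| + |l x| := abs_sub _ _
      _ ≤ M + M := add_le_add (hgM _ x) (hlM x)
  have hGF : ∀ m, G m ∈ Fspace := by
    intro m
    refine ⟨⟨M + M, fun x => ?_⟩, hAc.mono ?_⟩
    · rw [abs_of_nonneg (hG0 m x)]; exact hGM m x
    · intro x hx
      by_contra hxa
      apply hx
      have hzero : ∀ k : ℕ, |g (φ (m + k)) x - l x| = 0 := by
        intro k; rw [hgA _ x hxa, hlA x hxa]; simp
      have : G m x ≤ 0 := ciSup_le fun k => le_of_eq (hzero k)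
      exact le_antisymm this (hG0 m x)
  have hGanti : Antitone G := by
    intro m m' hmm'
    intro x
    refine ciSup_le fun k => ?_
    have heq : m' + k = m + (m' - m + k) := by omega
    rw [heq]
    exact le_ciSup (hbddR m x) (m' - m + k)
  have hGtend : ∀ x, ∀ ε : ℝ, 0 < ε → ∃ m : ℕ, G m x ≤ ε := by
    intro x ε hε
    have hd : Tendsto (fun k => |g (φ k) x - l x|) atTop (𝓝 0) := by
      have := ((hlt x).sub_const (l x)).abs
      simpa using this
    have := (hd.eventually (gt_mem_nhds hε)).exists_forall_of_atTop
    obtain ⟨N, hN⟩ := this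
    refine ⟨N, ciSup_le fun k => ?_⟩
    exact le_of_lt (hN (N + k) (Nat.le_add_right _ _))
  refine ⟨φ, hφ, l, ?_⟩
  refine ⟨hlF, ℕ, inferInstance,
    ⟨⟨0⟩, fun a b => ⟨max a b, le_max_left _ _, le_max_right _ _⟩⟩,
    G, hGF, hGanti, fun m x => hG0 m x, ?_, ?_⟩
  · intro w hwF hw x
    have hwle : ∀ ε : ℝ, 0 < ε → w x ≤ ε := by
      intro ε hε
      obtain ⟨m, hm⟩ := hGtend x ε hε
      exact le_trans (hw m x) hm
    by_contra hwx
    push_neg at hwx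
    have := hwle (w x / 2) (by simpa using hwx)
    simp only [Pi.zero_apply] at hwx
    linarith
  · intro m
    refine ⟨m, fun k hk => ?_⟩
    intro x
    have heq : φ k = φ (m + (k - m)) := by congr 1; omega
    simp only [Pi.abs_apply, Pi.sub_apply, hTf]
    rw [heq]
    exact le_ciSup (hbddR m x) (k - m)
end

section
/- Let X be an uncountable set (e.g., the set of strictly increasing maps ℕ → ℕ) and E = ℝ^X. If (φ_n) is a sequence in {−1,1}^X ⊆ E having no pointwise convergent subsequence, then the identity on (E,|·|,E) is not sequentially p-compact: the sequence (φ_n) is order bounded in E but no subsequence of it order converges in E. -/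
open Filter MeasureTheory Set

/-- **Example.** Let `X` be an uncountable set and `E = ℝ^X`. If `(φ_n)` is a
sequence of `±1`-valued functions with no pointwise convergent subsequence, then
`(φ_n)` is order bounded in `E` but no subsequence of it order converges in `E`;
hence the identity on `(E,|·|,E)` is not sequentially `p`-compact. -/
theorem identity_not_sequentially_pCompact {X : Type} [Nonempty X]
    (hX : ¬ (Set.univ : Set X).Countable)
    (φ : ℕ → X → ℝ) (hval : ∀ n x, φ n x = 1 ∨ φ n x = -1)
    (hnoconv : ∀ ψ : ℕ → ℕ, StrictMono ψ →
      ¬ ∃ l : X → ℝ, ∀ x, Filter.Tendsto (fun k => φ (ψ k) x)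
        Filter.atTop (nhds (l x))) :
    (∃ b : X → ℝ, ∀ n, |φ n| ≤ b) ∧
    ∀ ψ : ℕ → ℕ, StrictMono ψ →
      ¬ ∃ l : X → ℝ, OConvNet (fun k => φ (ψ k)) l := by
  constructor
  · refine ⟨fun _ => 1, fun n x => ?_⟩
    rcases hval n x with h | h <;> simp [Pi.abs_apply, h]
  · rintro ψ hψ ⟨l, Γ, pΓ, hdir, g, hanti, hglb, hconv⟩
    refine hnoconv ψ hψ ⟨l, fun x => ?_⟩
    classical
    rw [Metric.tendsto_atTop]
    intro ε hε
    have hgx : ∃ γ : Γ, g γ x < ε := by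
      by_contra hc
      push_neg at hc
      have hw : (fun y => if y = x then ε else 0) ∈ lowerBounds (Set.range g) := by
        rintro v ⟨γ, rfl⟩ y
        by_cases hy : y = x
        · simpa [hy] using hc γ
        · have h0 : (0 : X → ℝ) ≤ g γ := hglb.1 ⟨γ, rfl⟩
          simpa [hy] using h0 y
      have := hglb.2 hw x
      simp at this
      linarith
    obtain ⟨γ, hγ⟩ := hgx
    obtain ⟨α₀, hα⟩ := hconv γ
    refine ⟨α₀, fun k hk => ?_⟩
    have := hα k hk x
    rw [Real.dist_eq]
    calc |φ (ψ k) x - l x| ≤ g γ x := by simpa [Pi.abs_apply] using this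
      _ < ε := hγ
end

section
/- Every order bounded net of elements of {−1,1}^X ⊆ ℝ^X that order converges in ℝ^X converges pointwise; consequently, for X the set of strictly increasing maps ℕ → ℕ, there exists an order bounded sequence in ℝ^X with no order convergent subsequence. -/
open Filter MeasureTheory Set

theorem pmAux_partA (X A : Type) [Preorder A]
    (f : A → X → ℝ) (l : X → ℝ) (hconv : OConvNet f l) :
    ∀ x, Filter.Tendsto (fun α => f α x) Filter.atTop (nhds (l x)) := by
  intro x
  obtain ⟨Γ, _, ⟨⟨γ0⟩, _⟩, g, gant, gGLB, hdom⟩ := hconv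
  have hge : ∀ γ x', (0:ℝ) ≤ g γ x' := fun γ x' => gGLB.1 (mem_range_self γ) x'
  set S : Set ℝ := Set.range (fun γ => g γ x) with hS
  have hSne : S.Nonempty := ⟨g γ0 x, ⟨γ0, rfl⟩⟩
  have hSbd : BddBelow S := ⟨0, by rintro y ⟨γ, rfl⟩; exact hge γ x⟩
  have hinf0 : sInf S = 0 := by
    refine le_antisymm ?_ (le_csInf hSne (by rintro y ⟨γ, rfl⟩; exact hge γ x))
    classical
    have hlb : (fun x' => if x' = x then sInf S else 0) ∈ lowerBounds (Set.range g) := by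
      rintro _ ⟨γ, rfl⟩ x'
      by_cases h : x' = x
      · subst h; simpa using csInf_le hSbd ⟨γ, rfl⟩
      · simpa [h] using hge γ x'
    have := gGLB.2 hlb x
    simpa using this
  rw [Metric.tendsto_nhds]
  intro ε hε
  obtain ⟨y, ⟨γ, rfl⟩, hy⟩ := exists_lt_of_csInf_lt hSne (by rw [hinf0]; exact hε)
  obtain ⟨α₀, hα₀⟩ := hdom γ
  filter_upwards [Filter.mem_atTop α₀] with α hα
  have h2 : |f α x - l x| ≤ g γ x := by simpa using (hα₀ α hα) x
  rw [Real.dist_eq]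
  exact lt_of_le_of_lt h2 hy

/-- **Example.** (a) Every net of `±1`-valued functions in `ℝ^X` that order
converges in `ℝ^X` converges pointwise to its order limit. (b) Consequently,
for `X` the set of strictly increasing maps `ℕ → ℕ`, there is an order bounded
sequence in `ℝ^X` with no order convergent subsequence. -/
theorem pm_one_oConv_pointwise_and_counterexample :
    (∀ (X A : Type) (_ : Preorder A), IsDirectedIx A →
      ∀ (f : A → X → ℝ) (l : X → ℝ),
        (∀ α x, f α x = 1 ∨ f α x = -1) → OConvNet f l →
          ∀ x, Filter.Tendsto (fun α => f α x) Filter.atTop (nhds (l x))) ∧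
    ∃ φ : ℕ → ({g : ℕ → ℕ // StrictMono g} → ℝ),
      (∃ b, ∀ n, |φ n| ≤ b) ∧
      ∀ ψ : ℕ → ℕ, StrictMono ψ →
        ¬ ∃ l, OConvNet (fun k => φ (ψ k)) l := by
  classical
  constructor
  · intro X A _ _ f l _ hconv
    exact pmAux_partA X A f l hconv
  · refine ⟨fun n g => if Even (g.1 n) then 1 else -1, ⟨fun _ => 1, ?_⟩, ?_⟩
    · intro n g
      simp only [Pi.abs_apply]
      split <;> norm_num
    · rintro ψ hψ ⟨l, hl⟩
      set c : ℕ → ℕ := fun n => if ∃ k, ψ k = n ∧ Odd k then 1 else 0 with hc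
      have hcle : ∀ n, c n ≤ 1 := by intro n; dsimp [c]; split <;> omega
      have hg : StrictMono (fun n => 2*n + c n) := by
        apply strictMono_nat_of_lt_succ
        intro n
        have := hcle n
        omega
      set G : {g : ℕ → ℕ // StrictMono g} := ⟨fun n => 2*n + c n, hg⟩ with hG
      have hGk : ∀ k, G.1 (ψ k) = 2 * ψ k + (if Odd k then 1 else 0) := by
        intro k
        show 2 * ψ k + c (ψ k) = _
        congr 1
        dsimp [c]
        by_cases hk : Odd k
        · rw [if_pos ⟨k, rfl, hk⟩, if_pos hk]
        · rw [if_neg, if_neg hk]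
          rintro ⟨k', hk', hodd⟩
          exact hk (hψ.injective hk' ▸ hodd)
      have hval : ∀ k, (if Even (G.1 (ψ k)) then (1:ℝ) else -1)
          = (if Even k then (1:ℝ) else -1) := by
        intro k
        rw [hGk k]
        by_cases hk : Even k
        · have hodd : ¬ Odd k := Nat.not_odd_iff_even.mpr hk
          simp [hk, hodd, parity_simps]
        · have hodd : Odd k := Nat.not_even_iff_odd.mp hk
          simp [hk, hodd, parity_simps]
      have ht : Tendsto (fun k : ℕ => if Even k then (1:ℝ) else -1) atTop (nhds (l G)) := by
        have := pmAux_partA {g : ℕ → ℕ // StrictMono g} ℕ (fun k => (fun n g => if Even (g.1 n) then (1:ℝ) else -1) (ψ k)) l hl G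
        refine this.congr (fun k => ?_)
        exact hval k
      have h2 : Tendsto (fun k : ℕ => 2*k) atTop atTop :=
        (strictMono_nat_of_lt_succ (fun n => by omega)).tendsto_atTop
      have h2' : Tendsto (fun k : ℕ => 2*k+1) atTop atTop :=
        (strictMono_nat_of_lt_succ (fun n => by omega)).tendsto_atTop
      have he : Tendsto (fun _ : ℕ => (1:ℝ)) atTop (nhds (l G)) := by
        have := ht.comp h2
        refine this.congr (fun k => ?_)
        simp [Function.comp, Nat.even_mul]
      have ho : Tendsto (fun _ : ℕ => (-1:ℝ)) atTop (nhds (l G)) := by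
        have := ht.comp h2'
        refine this.congr (fun k => ?_)
        simp [Function.comp, Nat.even_add_one, Nat.even_mul]
      have e1 : l G = 1 := tendsto_nhds_unique he tendsto_const_nhds
      have e2 : l G = -1 := tendsto_nhds_unique ho tendsto_const_nhds
      rw [e1] at e2
      norm_num at e2
end

section
/- The Rademacher sequence r_n(t) = sgn(sin(2^n π t)) in L∞[0,1] has no order convergent subnet; hence the identity operator on the lattice-normed space (L∞[0,1], |·|, L∞[0,1]) is neither p-compact nor sequentially p-compact. -/
open Filter MeasureTheory Set

section RademacherAux
open Real intervalIntegral Topology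


lemma measurable_realSign : Measurable Real.sign := by
  unfold Real.sign
  exact Measurable.ite (measurableSet_lt measurable_id measurable_const) measurable_const
    (Measurable.ite (measurableSet_lt measurable_const measurable_id) measurable_const
      measurable_const)

lemma abs_realSign_le (x : ℝ) : |Real.sign x| ≤ 1 := by
  rcases Real.sign_apply_eq x with h | h | h <;> rw [h] <;> norm_num

noncomputable def Ffun (k : ℕ) (t : ℝ) : ℝ :=
  Real.sign (Real.sin (π * t)) * Real.sign (Real.sin (2^k * π * t))

lemma Ffun_meas (k : ℕ) : Measurable (Ffun k) := by
  apply Measurable.mul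
  · exact measurable_realSign.comp (Real.continuous_sin.measurable.comp (by fun_prop))
  · exact measurable_realSign.comp (Real.continuous_sin.measurable.comp (by fun_prop))

lemma Ffun_abs_le (k : ℕ) (t : ℝ) : |Ffun k t| ≤ 1 := by
  rw [Ffun, abs_mul]
  exact mul_le_one₀ (abs_realSign_le _) (abs_nonneg _) (abs_realSign_le _)

lemma Ffun_intInt (k : ℕ) (a b : ℝ) : IntervalIntegrable (Ffun k) volume a b := by
  rw [intervalIntegrable_iff]
  apply Integrable.mono' (g := fun _ => (1:ℝ))
  · exact integrableOn_const measure_Ioc_lt_top.ne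
  · exact (Ffun_meas k).aestronglyMeasurable
  · exact Filter.Eventually.of_forall fun t => by simpa using Ffun_abs_le k t

lemma Ffun_antiperiodic (k : ℕ) (hk : 1 ≤ k) : Function.Antiperiodic (Ffun k) 1 := by
  intro t
  obtain ⟨k', rfl⟩ : ∃ k', k = k' + 1 := ⟨k - 1, (Nat.succ_pred_eq_of_pos hk).symm⟩
  have h1 : Real.sin (π * (t + 1)) = -Real.sin (π * t) := by
    rw [mul_add, mul_one, Real.sin_add_pi]
  have h2 : Real.sin (2^(k'+1) * π * (t + 1)) = Real.sin (2^(k'+1) * π * t) := by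
    have : (2:ℝ)^(k'+1) * π * (t+1) = 2^(k'+1) * π * t + ((2^k' : ℤ) : ℝ) * (2*π) := by
      push_cast
      ring
    rw [this, Real.sin_add_int_mul_two_pi]
  simp only [Ffun, h1, h2, Real.sign_neg]
  ring

lemma Ffun_integral_zero (k m : ℕ) (hk : 1 ≤ k) (hm : 1 ≤ m) :
    ∫ t in (0:ℝ)..(2^m : ℝ), Ffun k t = 0 := by
  obtain ⟨m', rfl⟩ : ∃ m', m = m' + 1 := ⟨m - 1, (Nat.succ_pred_eq_of_pos hm).symm⟩
  have hper : Function.Periodic (Ffun k) 2 := by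
    have := (Ffun_antiperiodic k hk).periodic
    simpa using this
  have h2 : (2:ℝ)^(m'+1) = 0 + ((2^m' : ℤ)) • (2:ℝ) := by
    rw [zsmul_eq_mul]
    push_cast
    ring
  rw [h2, hper.intervalIntegral_add_zsmul_eq _ _ (fun a b => Ffun_intInt k a b)]
  have hone : ∫ t in (0:ℝ)..(0+2:ℝ), Ffun k t = 0 := by
    have hsplit : ∫ t in (0:ℝ)..(2:ℝ), Ffun k t =
        (∫ t in (0:ℝ)..(1:ℝ), Ffun k t) + ∫ t in (1:ℝ)..(2:ℝ), Ffun k t :=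
      (integral_add_adjacent_intervals (Ffun_intInt k 0 1) (Ffun_intInt k 1 2)).symm
    have hshift : ∫ t in (1:ℝ)..(2:ℝ), Ffun k t = ∫ t in (0:ℝ)..(1:ℝ), Ffun k (t + 1) := by
      rw [integral_comp_add_right]
      norm_num
    have hneg : ∫ t in (0:ℝ)..(1:ℝ), Ffun k (t + 1) = - ∫ t in (0:ℝ)..(1:ℝ), Ffun k t := by
      rw [← intervalIntegral.integral_neg]
      apply integral_congr
      intro x _
      exact (Ffun_antiperiodic k hk x)
    rw [zero_add, hsplit, hshift, hneg]
    ring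
  rw [hone, smul_zero]

lemma sign_sin_orth (m n : ℕ) (hm : 1 ≤ m) (hmn : m < n) :
    ∫ t in (0:ℝ)..1, Real.sign (Real.sin (2^m*π*t)) * Real.sign (Real.sin (2^n*π*t)) = 0 := by
  have hk : 1 ≤ n - m := Nat.le_sub_of_add_le (by omega)
  have hpow : (2:ℝ)^(n-m) * 2^m = 2^n := by
    rw [← pow_add, Nat.sub_add_cancel hmn.le]
  have hcongr : ∀ t : ℝ, Real.sign (Real.sin (2^m*π*t)) * Real.sign (Real.sin (2^n*π*t))
      = Ffun (n-m) ((2:ℝ)^m * t) := by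
    intro t
    simp only [Ffun]
    have e1 : (2:ℝ)^m * π * t = π * ((2:ℝ)^m * t) := by ring
    have e2 : (2:ℝ)^n * π * t = (2:ℝ)^(n-m) * π * ((2:ℝ)^m * t) := by
      rw [← hpow]; ring
    rw [e1, e2]
  rw [integral_congr (fun t _ => hcongr t),
    integral_comp_mul_left (Ffun (n-m)) (by positivity : (2:ℝ)^m ≠ 0)]
  rw [mul_zero, mul_one, Ffun_integral_zero (n-m) m hk hm, smul_zero]

noncomputable def sfun (n : ℕ) (t : ℝ) : ℝ := Real.sign (Real.sin (2^n * π * t))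

lemma sfun_meas (n : ℕ) : Measurable (sfun n) :=
  measurable_realSign.comp (Real.continuous_sin.measurable.comp (by fun_prop))

lemma sfun_abs_le (n : ℕ) (t : ℝ) : |sfun n t| ≤ 1 := abs_realSign_le _

lemma muIsFinite : IsFiniteMeasure (volume.restrict (Icc (0:ℝ) 1)) := by
  constructor
  rw [Measure.restrict_apply_univ, Real.volume_Icc]
  norm_num

lemma integrable_of_bdd {f : ℝ → ℝ} (hf : AEStronglyMeasurable f (volume.restrict (Icc (0:ℝ) 1)))
    (C : ℝ) (hb : ∀ᵐ t ∂(volume.restrict (Icc (0:ℝ) 1)), |f t| ≤ C) :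
    Integrable f (volume.restrict (Icc (0:ℝ) 1)) := by
  haveI := muIsFinite
  exact Integrable.mono' (integrable_const C) hf (by simpa using hb)

lemma sfun_sq (n : ℕ) :
    ∫ t, sfun n t * sfun n t ∂(volume.restrict (Icc (0:ℝ) 1)) = 1 := by
  have hnull : (volume.restrict (Icc (0:ℝ) 1)) {t : ℝ | Real.sin (2^n*π*t) = 0} = 0 := by
    apply le_antisymm _ zero_le
    refine le_trans (Measure.restrict_le_self _) (le_of_eq ?_)
    apply Set.Countable.measure_zero
    refine Set.Countable.mono ?_ (Set.countable_range (fun k : ℤ => (k:ℝ)/2^n))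
    intro t ht
    obtain ⟨k, hk⟩ := Real.sin_eq_zero_iff.1 ht
    refine ⟨k, ?_⟩
    have h2 : (2:ℝ)^n ≠ 0 := by positivity
    field_simp
    have := hk
    nlinarith [Real.pi_pos, hk]
  have hae : ∀ᵐ t ∂(volume.restrict (Icc (0:ℝ) 1)), sfun n t * sfun n t = 1 := by
    rw [MeasureTheory.ae_iff]
    apply measure_mono_null _ hnull
    intro t ht
    simp only [Set.mem_setOf_eq] at *
    by_contra hsin
    apply ht
    rcases Real.sign_apply_eq_of_ne_zero _ hsin with h | h <;> rw [sfun, h] <;> ring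
  rw [integral_congr_ae hae]
  haveI := muIsFinite
  simp only [MeasureTheory.integral_const, smul_eq_mul, mul_one]
  rw [Measure.real, Measure.restrict_apply_univ, Real.volume_Icc]
  norm_num

lemma sfun_orth (m n : ℕ) (hm : 1 ≤ m) (hmn : m < n) :
    ∫ t, sfun m t * sfun n t ∂(volume.restrict (Icc (0:ℝ) 1)) = 0 := by
  have : ∫ t, sfun m t * sfun n t ∂(volume.restrict (Icc (0:ℝ) 1))
      = ∫ t in (0:ℝ)..1, sfun m t * sfun n t := by
    rw [intervalIntegral.integral_of_le (by norm_num : (0:ℝ) ≤ 1)]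
    exact MeasureTheory.integral_Icc_eq_integral_Ioc
  rw [this]
  exact sign_sin_orth m n hm hmn

section InfLemma
variable {α : Type} [MeasurableSpace α] {μ : Measure α} [IsFiniteMeasure μ]

lemma lp_antitone_glb_integral (Γ : Type) [Preorder Γ] (hΓ : IsDirectedIx Γ)
    (g : Γ → Lp ℝ ⊤ μ) (hg : Antitone g) (hglb : IsGLB (Set.range g) 0)
    {ε : ℝ} (hε : 0 < ε) :
    ∃ γ : Γ, ∫ t, (g γ : α → ℝ) t ∂μ < ε := by
  obtain ⟨⟨γ₀⟩, hdir⟩ := hΓ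
  choose sup2 hsup1 hsup2 using hdir
  have intg : ∀ γ, Integrable (g γ : α → ℝ) μ := fun γ => (Lp.memLp (g γ)).integrable le_top
  have hposL : ∀ γ, (0:Lp ℝ ⊤ μ) ≤ g γ := fun γ => hglb.1 ⟨γ, rfl⟩
  have hpos : ∀ γ, (0:α→ℝ) ≤ᵐ[μ] (g γ : α → ℝ) := fun γ => by
    have := (Lp.coeFn_nonneg (g γ)).2 (hposL γ)
    filter_upwards [this] with t ht using ht
  set I : Γ → ℝ := fun γ => ∫ t, (g γ : α → ℝ) t ∂μ with hI
  have Inonneg : ∀ γ, 0 ≤ I γ := fun γ => integral_nonneg_of_ae (hpos γ)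
  have Imono : ∀ {γ δ : Γ}, γ ≤ δ → I δ ≤ I γ := fun {γ δ} hle =>
    integral_mono_ae (intg δ) (intg γ) ((Lp.coeFn_le _ _).2 (hg hle))
  have hbdd : BddBelow (Set.range I) := ⟨0, by rintro x ⟨γ, rfl⟩; exact Inonneg γ⟩
  have hne : (Set.range I).Nonempty := ⟨I γ₀, γ₀, rfl⟩
  set c : ℝ := sInf (Set.range I) with hc
  have hcle : ∀ γ, c ≤ I γ := fun γ => csInf_le hbdd ⟨γ, rfl⟩
  -- choose a sequence approaching the inf
  have hseq : ∀ k : ℕ, ∃ γ, I γ < c + 1/(k+1) := by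
    intro k
    have hlt : c < c + 1/(k+1) := by
      have : (0:ℝ) < 1/(k+1) := by positivity
      linarith
    obtain ⟨x, ⟨γ, rfl⟩, hx⟩ := (csInf_lt_iff hbdd hne).1 hlt
    exact ⟨γ, hx⟩
  choose γseq hγseq using hseq
  set δ : ℕ → Γ := fun k => Nat.rec (γseq 0) (fun k d => sup2 d (γseq (k+1))) k with hδ
  have hδsucc : ∀ k, δ k ≤ δ (k+1) := fun k => hsup1 _ _
  have hδmono : Monotone δ := monotone_nat_of_le_succ hδsucc
  have hδγ : ∀ k, γseq k ≤ δ k := by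
    intro k; cases k with
    | zero => exact le_refl _
    | succ k => exact hsup2 _ _
  have hIδ : ∀ k : ℕ, c ≤ I (δ k) ∧ I (δ k) < c + 1/(k+1) := fun k =>
    ⟨hcle _, lt_of_le_of_lt (Imono (hδγ k)) (hγseq k)⟩
  have hsqueeze : ∀ (u : ℕ → Γ), (∀ k, c ≤ I (u k) ∧ I (u k) < c + 1/(k+1)) →
      Tendsto (fun k => I (u k)) atTop (𝓝 c) := by
    intro u hu
    apply tendsto_of_tendsto_of_tendsto_of_le_of_le (g := fun _ : ℕ => c)
      (h := fun k : ℕ => c + 1/(k+1)) tendsto_const_nhds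
    · have h0 : Tendsto (fun k : ℕ => 1/((k:ℝ)+1)) atTop (𝓝 0) :=
        tendsto_one_div_add_atTop_nhds_zero_nat
      have := tendsto_const_nhds (x := c) (f := atTop (α := ℕ)) |>.add h0
      simpa using this
    · exact fun k => (hu k).1
    · exact fun k => ((hu k).2).le
  -- pointwise infimum machinery
  have hkey : ∀ (u : ℕ → Γ), Monotone u → (∀ k, c ≤ I (u k) ∧ I (u k) < c + 1/(k+1)) →
      ∃ h : α → ℝ, AEStronglyMeasurable h μ ∧ Integrable h μ ∧
        (∫ t, h t ∂μ) = c ∧ (∀ᵐ t ∂μ, 0 ≤ h t) ∧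
        (∀ᵐ t ∂μ, h t = ⨅ k, (g (u k) : α → ℝ) t) ∧
        (∀ᵐ t ∂μ, ∀ k, (g (u k) : α → ℝ) t ≤ (g (u 0) : α → ℝ) t) := by
    intro u humono hu
    set G : ℕ → α → ℝ := fun k => (g (u k) : α → ℝ) with hG
    have hA : ∀ᵐ t ∂μ, (∀ k, G (k+1) t ≤ G k t) ∧ (∀ k, 0 ≤ G k t) := by
      rw [eventually_and]
      constructor
      · rw [ae_all_iff]
        intro k
        have := (Lp.coeFn_le (g (u (k+1))) (g (u k))).2 (hg (humono (Nat.le_succ k)))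
        filter_upwards [this] with t ht using ht
      · rw [ae_all_iff]; exact fun k => hpos (u k)
    set h : α → ℝ := fun t => ⨅ k, G k t with hh
    have htend : ∀ᵐ t ∂μ, Tendsto (fun k => G k t) atTop (𝓝 (h t)) := by
      filter_upwards [hA] with t ⟨h1, h2⟩
      have hanti : Antitone (fun k => G k t) := antitone_nat_of_succ_le (f := fun k => G k t) h1
      have hbb : BddBelow (Set.range (fun k => G k t)) :=
        ⟨0, by rintro x ⟨k, rfl⟩; exact h2 k⟩
      exact tendsto_atTop_ciInf hanti hbb
    have hmeas : AEStronglyMeasurable h μ :=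
      aestronglyMeasurable_of_tendsto_ae atTop
        (fun k => (Lp.aestronglyMeasurable (g (u k)))) htend
    have hGle0 : ∀ᵐ t ∂μ, ∀ k, G k t ≤ G 0 t := by
      filter_upwards [hA] with t ⟨h1, _⟩ k
      exact (antitone_nat_of_succ_le (f := fun k => G k t) h1) (Nat.zero_le k)
    have hbound : ∀ k, ∀ᵐ t ∂μ, ‖G k t‖ ≤ G 0 t := by
      intro k
      filter_upwards [hA, hGle0] with t ⟨h1, h2⟩ h3
      rw [Real.norm_eq_abs, abs_of_nonneg (h2 k)]
      exact h3 k
    have hDCT : Tendsto (fun k => ∫ t, G k t ∂μ) atTop (𝓝 (∫ t, h t ∂μ)) :=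
      tendsto_integral_of_dominated_convergence (G 0)
        (fun k => Lp.aestronglyMeasurable (g (u k))) (intg (u 0)) hbound htend
    have hint : (∫ t, h t ∂μ) = c :=
      tendsto_nhds_unique hDCT (hsqueeze u hu)
    have hhpos : ∀ᵐ t ∂μ, 0 ≤ h t := by
      filter_upwards [hA] with t ⟨_, h2⟩
      exact le_ciInf h2
    have hinteg : Integrable h μ := by
      apply Integrable.mono' (intg (u 0)) hmeas
      filter_upwards [hA, hGle0, hhpos] with t ⟨h1, h2⟩ h3 h4
      rw [Real.norm_eq_abs, abs_of_nonneg h4]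
      have hbb : BddBelow (Set.range (fun k => G k t)) :=
        ⟨0, by rintro x ⟨k, rfl⟩; exact h2 k⟩
      exact ciInf_le hbb 0
    exact ⟨h, hmeas, hinteg, hint, hhpos, Filter.Eventually.of_forall (fun t => rfl), hGle0⟩
  obtain ⟨h, hmeas, hinteg, hint, hhpos, hhdef, _⟩ := hkey δ hδmono hIδ
  -- h is a lower bound of the range of g
  have hlb : ∀ γ : Γ, ∀ᵐ t ∂μ, h t ≤ (g γ : α → ℝ) t := by
    intro γ
    set e : ℕ → Γ := fun k => Nat.rec (sup2 (δ 0) γ) (fun k d => sup2 d (δ (k+1))) k with he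
    have hesucc : ∀ k, e k ≤ e (k+1) := fun k => hsup1 _ _
    have hemono : Monotone e := monotone_nat_of_le_succ hesucc
    have heδ : ∀ k, δ k ≤ e k := by
      intro k; cases k with
      | zero => exact hsup1 _ _
      | succ k => exact hsup2 _ _
    have heγ : ∀ k, γ ≤ e k := by
      intro k; induction k with
      | zero => exact hsup2 _ _
      | succ k ih => exact le_trans ih (hesucc k)
    have hIe : ∀ k : ℕ, c ≤ I (e k) ∧ I (e k) < c + 1/(k+1) := fun k =>
      ⟨hcle _, lt_of_le_of_lt (Imono (heδ k)) (hIδ k).2⟩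
    obtain ⟨h', hmeas', hinteg', hint', hhpos', hhdef', hGle'⟩ := hkey e hemono hIe
    -- h' ≤ h a.e.
    have hδle : ∀ᵐ t ∂μ, ∀ k, (g (e k) : α → ℝ) t ≤ (g (δ k) : α → ℝ) t := by
      rw [ae_all_iff]
      intro k
      have := (Lp.coeFn_le (g (e k)) (g (δ k))).2 (hg (heδ k))
      filter_upwards [this] with t ht using ht
    have hG'pos : ∀ᵐ t ∂μ, ∀ k, (0:ℝ) ≤ (g (e k) : α → ℝ) t := by
      rw [ae_all_iff]
      intro k
      filter_upwards [hpos (e k)] with t ht using ht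
    have h'leh : ∀ᵐ t ∂μ, h' t ≤ h t := by
      filter_upwards [hhdef, hhdef', hδle, hG'pos] with t ht ht' hle hpos'
      rw [ht, ht']
      have hbb : BddBelow (Set.range (fun k => (g (e k) : α → ℝ) t)) :=
        ⟨0, by rintro x ⟨k, rfl⟩; exact hpos' k⟩
      exact ciInf_mono hbb hle
    -- equal integrals force equality
    have hdiff : ∀ᵐ t ∂μ, h t = h' t := by
      have hzero : ∫ t, (h t - h' t) ∂μ = 0 := by
        rw [integral_sub hinteg hinteg', hint, hint', sub_self]
      have hnn : 0 ≤ᵐ[μ] fun t => h t - h' t := by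
        filter_upwards [h'leh] with t ht
        simpa using ht
      have := (integral_eq_zero_iff_of_nonneg_ae hnn (hinteg.sub hinteg')).1 hzero
      filter_upwards [this] with t ht
      have : h t - h' t = 0 := ht
      linarith
    -- h' ≤ g γ a.e.
    have h'le : ∀ᵐ t ∂μ, h' t ≤ (g γ : α → ℝ) t := by
      have hgeγ : ∀ᵐ t ∂μ, (g (e 0) : α → ℝ) t ≤ (g γ : α → ℝ) t := by
        have := (Lp.coeFn_le (g (e 0)) (g γ)).2 (hg (heγ 0))
        filter_upwards [this] with t ht using ht
      filter_upwards [hhdef', hG'pos, hgeγ] with t ht' hpos' hgt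
      rw [ht']
      have hbb : BddBelow (Set.range (fun k => (g (e k) : α → ℝ) t)) :=
        ⟨0, by rintro x ⟨k, rfl⟩; exact hpos' k⟩
      exact le_trans (ciInf_le hbb 0) hgt
    filter_upwards [hdiff, h'le] with t ht h't
    rw [ht]; exact h't
  -- build the Lp element
  have hmem : MemLp h ⊤ μ := by
    apply MemLp.of_le (Lp.memLp (g (δ 0))) hmeas
    have := hlb (δ 0)
    filter_upwards [this, hhpos] with t h1 h2
    rw [Real.norm_eq_abs, Real.norm_eq_abs, abs_of_nonneg h2]
    exact le_trans h1 (le_abs_self _)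
  set hL : Lp ℝ ⊤ μ := hmem.toLp h with hLdef
  have hLlb : hL ∈ lowerBounds (Set.range g) := by
    rintro x ⟨γ, rfl⟩
    rw [← Lp.coeFn_le]
    filter_upwards [hmem.coeFn_toLp, hlb γ] with t h1 h2
    rw [h1]; exact h2
  have hLle0 : hL ≤ 0 := hglb.2 hLlb
  have hle0ae : ∀ᵐ t ∂μ, h t ≤ 0 := by
    have := (Lp.coeFn_le hL 0).mpr hLle0
    filter_upwards [this, hmem.coeFn_toLp, Lp.coeFn_zero (E := ℝ) (p := ⊤) (μ := μ)]
      with t h1 h2 h3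
    rw [← h2]
    calc (hL : α → ℝ) t ≤ (0 : Lp ℝ ⊤ μ) t := h1
    _ = 0 := h3
  have hzeroae : ∀ᵐ t ∂μ, h t = 0 := by
    filter_upwards [hle0ae, hhpos] with t h1 h2
    linarith
  have hc0 : c = 0 := by
    rw [← hint]
    rw [integral_congr_ae hzeroae]
    simp
  obtain ⟨x, ⟨γ, rfl⟩, hx⟩ := (csInf_lt_iff hbdd hne).1 (by rw [← hc] at *; rw [hc0]; exact hε)
  exact ⟨γ, hx⟩

end InfLemma

end RademacherAux

open Real in
/-- **Example.** The Rademacher sequence `r_n(t) = sgn (sin (2^n π t))` in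
`L∞[0,1]` has no order convergent subnet; hence the identity on
`(L∞[0,1], |·|, L∞[0,1])` is neither `p`-compact nor sequentially `p`-compact. -/
theorem rademacher_no_order_convergent_subnet
    (μ : Measure ℝ) (hμ : μ = MeasureTheory.volume.restrict (Set.Icc (0:ℝ) 1))
    (r : ℕ → MeasureTheory.Lp ℝ ⊤ μ)
    (hr : ∀ n : ℕ, ∀ᵐ t ∂μ,
      (r n : ℝ → ℝ) t = Real.sign (Real.sin ((2:ℝ)^n * π * t))) :
    ∀ (B : Type) (_ : Preorder B), IsDirectedIx B →
      ∀ φ : B → ℕ, IsSubnet φ →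
        ¬ ∃ l : MeasureTheory.Lp ℝ ⊤ μ, OConvNet (fun β => r (φ β)) l := by
  subst hμ
  haveI : IsFiniteMeasure (MeasureTheory.volume.restrict (Set.Icc (0:ℝ) 1)) := muIsFinite
  intro B _inst hB φ hφ
  rintro ⟨l, Γ, instΓ, hΓdir, g, hganti, hglb, hconv⟩
  obtain ⟨γ, hγ⟩ := lp_antitone_glb_integral Γ hΓdir g hganti hglb
    (by norm_num : (0:ℝ) < 1/2)
  obtain ⟨β₀, hβ₀⟩ := hconv γ
  obtain ⟨hφmono, hφcof⟩ := hφ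
  obtain ⟨_, hBdir⟩ := hB
  obtain ⟨β₁, hβ₁⟩ := hφcof 1
  obtain ⟨β₂, hβ₂₀, hβ₂₁⟩ := hBdir β₀ β₁
  set m := φ β₂ with hmdef
  have hm : 1 ≤ m := le_trans hβ₁ (hφmono hβ₂₁)
  obtain ⟨β₃, hβ₃⟩ := hφcof (m + 1)
  obtain ⟨β₄, hβ₄₀, hβ₄₃⟩ := hBdir β₀ β₃
  set n := φ β₄ with hndef
  have hmn : m < n := lt_of_lt_of_le (Nat.lt_succ_self m) (le_trans hβ₃ (hφmono hβ₄₃))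
  have h1 : |r m - l| ≤ g γ := by simpa using hβ₀ β₂ hβ₂₀
  have h2 : |r n - l| ≤ g γ := by simpa using hβ₀ β₄ hβ₄₀
  -- translate to a.e. pointwise bounds
  have hae : ∀ {k : ℕ}, |r k - l| ≤ g γ →
      ∀ᵐ t ∂(MeasureTheory.volume.restrict (Set.Icc (0:ℝ) 1)), |(r k : ℝ → ℝ) t - (l : ℝ → ℝ) t| ≤ (g γ : ℝ → ℝ) t := by
    intro k hk
    have e1 := (MeasureTheory.Lp.coeFn_le _ _).mpr hk
    filter_upwards [e1, MeasureTheory.Lp.coeFn_abs (r k - l),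
      MeasureTheory.Lp.coeFn_sub (r k) l] with t ht habs hsub
    calc |(r k : ℝ → ℝ) t - (l : ℝ → ℝ) t| = |(↑(r k - l) : ℝ → ℝ) t| := by rw [hsub]; rfl
    _ = (↑|r k - l| : ℝ → ℝ) t := (habs).symm
    _ ≤ (g γ : ℝ → ℝ) t := ht
  have haem := hae h1
  have haen := hae h2
  -- integrability facts
  have intprod : ∀ a b : ℕ, MeasureTheory.Integrable (fun t => sfun a t * sfun b t) (MeasureTheory.volume.restrict (Set.Icc (0:ℝ) 1)) := by
    intro a b
    apply integrable_of_bdd ((sfun_meas a).mul (sfun_meas b)).aestronglyMeasurable 1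
    apply Filter.Eventually.of_forall
    intro t
    rw [Pi.mul_apply, abs_mul]
    exact mul_le_one₀ (sfun_abs_le a t) (abs_nonneg _) (sfun_abs_le b t)
  have intg : MeasureTheory.Integrable ((g γ : ℝ → ℝ)) (MeasureTheory.volume.restrict (Set.Icc (0:ℝ) 1)) :=
    (MeasureTheory.Lp.memLp (g γ)).integrable le_top
  -- the key integral inequality
  have hkey : ∫ t, (sfun n t - sfun m t) * sfun n t ∂(MeasureTheory.volume.restrict (Set.Icc (0:ℝ) 1)) ≤ ∫ t, 2 * (g γ : ℝ → ℝ) t ∂(MeasureTheory.volume.restrict (Set.Icc (0:ℝ) 1)) := by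
    apply MeasureTheory.integral_mono_ae
    · have : (fun t => (sfun n t - sfun m t) * sfun n t)
          = fun t => sfun n t * sfun n t - sfun m t * sfun n t := by
        funext t; ring
      rw [this]
      exact (intprod n n).sub (intprod m n)
    · exact intg.const_mul 2
    · filter_upwards [hr m, hr n, haem, haen] with t hrm hrn b1 b2
      have hsm : sfun m t = (r m : ℝ → ℝ) t := by simp only [sfun]; exact hrm.symm
      have hsn : sfun n t = (r n : ℝ → ℝ) t := by simp only [sfun]; exact hrn.symm
      calc (sfun n t - sfun m t) * sfun n t ≤ |(sfun n t - sfun m t) * sfun n t| :=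
            le_abs_self _
      _ = |sfun n t - sfun m t| * |sfun n t| := abs_mul _ _
      _ ≤ |sfun n t - sfun m t| * 1 :=
            mul_le_mul_of_nonneg_left (sfun_abs_le n t) (abs_nonneg _)
      _ = |(r n : ℝ → ℝ) t - (r m : ℝ → ℝ) t| := by rw [mul_one, hsm, hsn]
      _ ≤ |(r n : ℝ → ℝ) t - (l : ℝ → ℝ) t| + |(r m : ℝ → ℝ) t - (l : ℝ → ℝ) t| := by
            have := abs_sub_le ((r n : ℝ → ℝ) t) ((l : ℝ → ℝ) t) ((r m : ℝ → ℝ) t)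
            rwa [abs_sub_comm ((l : ℝ → ℝ) t) ((r m : ℝ → ℝ) t)] at this
      _ ≤ 2 * (g γ : ℝ → ℝ) t := by linarith
  have hL : ∫ t, (sfun n t - sfun m t) * sfun n t ∂(MeasureTheory.volume.restrict (Set.Icc (0:ℝ) 1)) = 1 := by
    have : (fun t => (sfun n t - sfun m t) * sfun n t)
        = fun t => sfun n t * sfun n t - sfun m t * sfun n t := by
      funext t; ring
    rw [this, MeasureTheory.integral_sub (intprod n n) (intprod m n),
      sfun_sq n, sfun_orth m n hm hmn, sub_zero]
  have hR : ∫ t, 2 * (g γ : ℝ → ℝ) t ∂(MeasureTheory.volume.restrict (Set.Icc (0:ℝ) 1)) < 1 := by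
    rw [MeasureTheory.integral_const_mul]
    linarith
  rw [hL] at hkey
  linarith
end

section
/- If a subnet (r_{n_α}) of an orthonormal sequence (r_n) of unimodular functions in L∞[0,1] (|r_n| = 1 a.e., ∫ r_m r_n = 0 for m ≠ n) order converges to r in L∞[0,1], then ∫₀¹ r² dμ = 0, which is impossible; hence no such subnet exists. -/
open Filter MeasureTheory Set Topology

lemma aux_hint {μ : Measure ℝ} [IsFiniteMeasure μ] (h : Lp ℝ ⊤ μ) :
    Integrable (h : ℝ → ℝ) μ := (Lp.memLp h).integrable le_top

/-- Order-continuity style contradiction: an antitone net in `L∞` with infimum `0`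
cannot have all integrals bounded below by `1/2`. -/
lemma aux_no_net (μ : Measure ℝ) [IsFiniteMeasure μ] {Γ : Type} [Preorder Γ]
    (hdir : (Nonempty Γ) ∧ ∀ a b : Γ, ∃ c : Γ, a ≤ c ∧ b ≤ c)
    (g : Γ → Lp ℝ ⊤ μ) (hanti : Antitone g)
    (hglb : IsGLB (Set.range g) 0)
    (hbig : ∀ γ, (1:ℝ)/2 ≤ ∫ t, (g γ : ℝ → ℝ) t ∂μ) : False := by
  obtain ⟨⟨γd⟩, hup⟩ := hdir
  have hint : ∀ h : Lp ℝ ⊤ μ, Integrable (h : ℝ → ℝ) μ := fun h => aux_hint h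
  set I : Γ → ℝ := fun γ => ∫ t, (g γ : ℝ → ℝ) t ∂μ with hIdef
  have hmono : ∀ {γ δ : Γ}, γ ≤ δ → I δ ≤ I γ := by
    intro γ δ h
    exact integral_mono_ae (hint _) (hint _) ((Lp.coeFn_le _ _).2 (hanti h))
  have hne : (Set.range I).Nonempty := ⟨I γd, ⟨γd, rfl⟩⟩
  have hbdd : BddBelow (Set.range I) := ⟨1/2, by rintro x ⟨γ, rfl⟩; exact hbig γ⟩
  set c : ℝ := sInf (Set.range I) with hcdef
  have hc_half : (1:ℝ)/2 ≤ c := le_csInf hne (by rintro x ⟨γ, rfl⟩; exact hbig γ)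
  have hcle : ∀ γ, c ≤ I γ := fun γ => csInf_le hbdd ⟨γ, rfl⟩
  have hex : ∀ (k : ℕ) (γ0 : Γ), ∃ δ, γ0 ≤ δ ∧ I δ < c + 1/((k:ℝ)+1) := by
    intro k γ0
    have hε : (0:ℝ) < 1/((k:ℝ)+1) := by positivity
    obtain ⟨x, hxmem, hx⟩ := exists_lt_of_csInf_lt hne (lt_add_of_pos_right c hε)
    obtain ⟨γ1, rfl⟩ := hxmem
    obtain ⟨δ, h0, h1⟩ := hup γ0 γ1
    exact ⟨δ, h0, lt_of_le_of_lt (hmono h1) hx⟩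
  choose F hF1 hF2 using hex
  let s : ℕ → Γ := fun k => Nat.rec (F 0 γd) (fun k ih => F (k+1) ih) k
  have hs_le : ∀ k, s k ≤ s (k+1) := fun k => hF1 (k+1) (s k)
  have hs_lt : ∀ k, I (s k) < c + 1/((k:ℝ)+1) := by
    intro k
    cases k with
    | zero => exact hF2 0 γd
    | succ k => exact hF2 (k+1) (s k)
  set f : ℕ → ℝ → ℝ := fun k => ((g (s k) : Lp ℝ ⊤ μ) : ℝ → ℝ) with hfdef
  have hmeas : ∀ k, AEMeasurable (f k) μ := fun k =>
    (Lp.aestronglyMeasurable _).aemeasurable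
  have h_step : ∀ᵐ t ∂μ, ∀ k, f (k+1) t ≤ f k t :=
    ae_all_iff.2 fun k => (Lp.coeFn_le _ _).2 (hanti (hs_le k))
  have hg0 : ∀ γ, (0 : Lp ℝ ⊤ μ) ≤ g γ := fun γ => hglb.1 ⟨γ, rfl⟩
  have h_nn : ∀ᵐ t ∂μ, ∀ k, 0 ≤ f k t := by
    rw [ae_all_iff]
    intro k
    filter_upwards [(Lp.coeFn_le _ _).2 (hg0 (s k)),
      Lp.coeFn_zero (E := ℝ) (p := ⊤) (μ := μ)] with t h1 h2
    rw [h2] at h1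
    exact h1
  have h_le0 : ∀ᵐ t ∂μ, ∀ k, f k t ≤ f 0 t := by
    filter_upwards [h_step] with t ht
    intro k
    induction k with
    | zero => exact le_rfl
    | succ k ih => exact (ht k).trans ih
  set W : ℝ → ℝ := fun t => ⨅ k, max (f k t) 0 with hWdef
  have hWnn : ∀ t, 0 ≤ W t := fun t => Real.iInf_nonneg fun k => le_max_right _ _
  have hWle : ∀ t k, W t ≤ max (f k t) 0 := fun t k =>
    ciInf_le ⟨0, by rintro x ⟨j, rfl⟩; exact le_max_right _ _⟩ k
  have hWmeas : AEMeasurable W μ := AEMeasurable.iInf fun k => (hmeas k).max aemeasurable_const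
  have hWsm : AEStronglyMeasurable W μ := hWmeas.aestronglyMeasurable
  have hWbound : ∀ᵐ t ∂μ, ‖W t‖ ≤ ‖f 0 t‖ := by
    filter_upwards [h_nn] with t ht
    rw [Real.norm_eq_abs, Real.norm_eq_abs, abs_of_nonneg (hWnn t)]
    calc W t ≤ max (f 0 t) 0 := hWle t 0
      _ = f 0 t := max_eq_left (ht 0)
      _ ≤ |f 0 t| := le_abs_self _
  have hWint : Integrable W μ := Integrable.mono (hint (g (s 0))) hWsm hWbound
  have hWconv : ∀ᵐ t ∂μ, Tendsto (fun k => f k t) atTop (𝓝 (W t)) := by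
    filter_upwards [h_step, h_nn] with t ht hn
    have hmax : ∀ k, max (f k t) 0 = f k t := fun k => max_eq_left (hn k)
    have hWt : W t = ⨅ k, f k t := by
      show (⨅ k, max (f k t) 0) = ⨅ k, f k t
      simp only [hmax]
    rw [hWt]
    exact tendsto_atTop_ciInf (antitone_nat_of_succ_le ht)
      ⟨0, by rintro x ⟨k, rfl⟩; exact hn k⟩
  have htend : Tendsto (fun k => ∫ t, f k t ∂μ) atTop (𝓝 (∫ t, W t ∂μ)) := by
    refine tendsto_integral_of_dominated_convergence (fun t => ‖f 0 t‖)
      (fun k => Lp.aestronglyMeasurable _) (hint (g (s 0))).norm ?_ hWconv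
    intro k
    filter_upwards [h_nn, h_le0] with t h1 h2
    rw [Real.norm_eq_abs, Real.norm_eq_abs, abs_of_nonneg (h1 k)]
    exact (h2 k).trans (le_abs_self _)
  have hIs_tend : Tendsto (fun k => I (s k)) atTop (𝓝 c) := by
    have h1 : Tendsto (fun k : ℕ => c + 1/((k:ℝ)+1)) atTop (𝓝 (c + 0)) :=
      tendsto_const_nhds.add tendsto_one_div_add_atTop_nhds_zero_nat
    rw [add_zero] at h1
    exact tendsto_of_tendsto_of_tendsto_of_le_of_le tendsto_const_nhds h1
      (fun k => hcle (s k)) (fun k => (hs_lt k).le)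
  have hWc : ∫ t, W t ∂μ = c := tendsto_nhds_unique htend hIs_tend
  -- for each γ, ∫ min (g γ) W ≥ c
  have hminint : ∀ γ, Integrable (fun t => min ((g γ : ℝ → ℝ) t) (W t)) μ := by
    intro γ
    exact (hint (g γ)).inf hWint
  have hmin_ge : ∀ γ, c ≤ ∫ t, min ((g γ : ℝ → ℝ) t) (W t) ∂μ := by
    intro γ
    have hk : ∀ k, c ≤ ∫ t, min ((g γ : ℝ → ℝ) t) (f k t) ∂μ := by
      intro k
      obtain ⟨δ, h1, h2⟩ := hup γ (s k)
      have e1 : ⇑(g δ) ≤ᵐ[μ] ⇑(g γ) := (Lp.coeFn_le _ _).2 (hanti h1)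
      have e2 : ⇑(g δ) ≤ᵐ[μ] f k := (Lp.coeFn_le _ _).2 (hanti h2)
      have hle : ∫ t, (g δ : ℝ → ℝ) t ∂μ ≤ ∫ t, min ((g γ : ℝ → ℝ) t) (f k t) ∂μ := by
        refine integral_mono_ae (hint _) ((hint (g γ)).inf (hint (g (s k)))) ?_
        filter_upwards [e1, e2] with t u1 u2
        exact le_min u1 u2
      exact (hcle δ).trans hle
    have htend2 : Tendsto (fun k => ∫ t, min ((g γ : ℝ → ℝ) t) (f k t) ∂μ) atTop
        (𝓝 (∫ t, min ((g γ : ℝ → ℝ) t) (W t) ∂μ)) := by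
      refine tendsto_integral_of_dominated_convergence
        (fun t => |(g γ : ℝ → ℝ) t| + ‖f 0 t‖)
        (fun k => ((Lp.aestronglyMeasurable (g γ)).aemeasurable.min
          (hmeas k)).aestronglyMeasurable)
        ((hint (g γ)).abs.add (hint (g (s 0))).norm) ?_ ?_
      · intro k
        filter_upwards [h_nn, h_le0] with t h1 h2
        rw [Real.norm_eq_abs]
        calc |min ((g γ : ℝ → ℝ) t) (f k t)|
            ≤ max |(g γ : ℝ → ℝ) t| |f k t| := abs_min_le_max_abs_abs
          _ ≤ |(g γ : ℝ → ℝ) t| + ‖f 0 t‖ := by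
              refine max_le (le_add_of_nonneg_right (norm_nonneg _)) ?_
              rw [abs_of_nonneg (h1 k), Real.norm_eq_abs]
              exact le_add_of_nonneg_left (abs_nonneg _) |>.trans
                (by gcongr; exact (h2 k).trans (le_abs_self _))
      · filter_upwards [hWconv] with t ht
        exact tendsto_const_nhds.min ht
    exact ge_of_tendsto htend2 (Eventually.of_forall hk)
  -- hence W ≤ g γ a.e.
  have hWlb : ∀ γ, ∀ᵐ t ∂μ, W t ≤ (g γ : ℝ → ℝ) t := by
    intro γ
    have hle2 : ∫ t, min ((g γ : ℝ → ℝ) t) (W t) ∂μ ≤ ∫ t, W t ∂μ :=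
      integral_mono_ae (hminint γ) hWint (Eventually.of_forall fun t => min_le_right _ _)
    have hzero : ∫ t, (W t - min ((g γ : ℝ → ℝ) t) (W t)) ∂μ = 0 := by
      rw [integral_sub hWint (hminint γ), hWc]
      have := hmin_ge γ
      rw [hWc] at hle2
      linarith
    have hae0 := (integral_eq_zero_iff_of_nonneg_ae
      (Eventually.of_forall fun t => sub_nonneg.2 (min_le_right _ _))
      (hWint.sub (hminint γ))).1 hzero
    filter_upwards [hae0] with t ht
    have : min ((g γ : ℝ → ℝ) t) (W t) = W t := by
      have := sub_eq_zero.1 ht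
      linarith [min_le_right ((g γ : ℝ → ℝ) t) (W t)]
    exact min_eq_right_iff.1 this
  have hWmem : MemLp W ⊤ μ := MemLp.of_le (Lp.memLp (g (s 0))) hWsm hWbound
  set w : Lp ℝ ⊤ μ := hWmem.toLp W with hwdef
  have hw_lb : w ∈ lowerBounds (Set.range g) := by
    rintro x ⟨γ, rfl⟩
    refine (Lp.coeFn_le w (g γ)).1 ?_
    filter_upwards [hWmem.coeFn_toLp, hWlb γ] with t h1 h2
    rw [h1]
    exact h2
  have hw0 : w ≤ 0 := hglb.2 hw_lb
  have hwle : ∫ t, (w : ℝ → ℝ) t ∂μ ≤ 0 := by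
    have h := (Lp.coeFn_le w (0 : Lp ℝ ⊤ μ)).2 hw0
    have h2 : ∫ t, (w : ℝ → ℝ) t ∂μ ≤ ∫ t, ((0 : Lp ℝ ⊤ μ) : ℝ → ℝ) t ∂μ :=
      integral_mono_ae (hint w) (hint 0) h
    have hz : ∫ t, ((0 : Lp ℝ ⊤ μ) : ℝ → ℝ) t ∂μ = 0 := by
      rw [integral_congr_ae (Lp.coeFn_zero (E := ℝ) (p := ⊤) (μ := μ))]
      simp
    linarith
  have hwW : ∫ t, (w : ℝ → ℝ) t ∂μ = c := by
    rw [integral_congr_ae hWmem.coeFn_toLp, hWc]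
  rw [hwW] at hwle
  linarith

lemma aux_half_le (μ : Measure ℝ) [IsProbabilityMeasure μ]
    (r : ℕ → MeasureTheory.Lp ℝ ⊤ μ)
    (huni : ∀ n : ℕ, ∀ᵐ t ∂μ, |(r n : ℝ → ℝ) t| = 1)
    (horth : ∀ m n : ℕ, m ≠ n →
      (∫ t, (r m : ℝ → ℝ) t * (r n : ℝ → ℝ) t ∂μ) = 0)
    {m n : ℕ} (hmn : m ≠ n) (ρ G : Lp ℝ ⊤ μ)
    (ha : |r m - ρ| ≤ G) (hb : |r n - ρ| ≤ G) :
    (1:ℝ)/2 ≤ ∫ t, (G : ℝ → ℝ) t ∂μ := by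
  have hint : ∀ h : Lp ℝ ⊤ μ, Integrable (h : ℝ → ℝ) μ := fun h => aux_hint h
  set a : ℝ → ℝ := ((r m : Lp ℝ ⊤ μ) : ℝ → ℝ) with hadef
  set b : ℝ → ℝ := ((r n : Lp ℝ ⊤ μ) : ℝ → ℝ) with hbdef
  have haae : ∀ᵐ t ∂μ, |a t - (ρ : ℝ → ℝ) t| ≤ (G : ℝ → ℝ) t := by
    have h1 := (Lp.coeFn_le _ _).2 ha
    filter_upwards [h1, Lp.coeFn_abs (r m - ρ), Lp.coeFn_sub (r m) ρ] with t u1 u2 u3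
    rw [u2, u3] at u1
    simpa using u1
  have hbae : ∀ᵐ t ∂μ, |b t - (ρ : ℝ → ℝ) t| ≤ (G : ℝ → ℝ) t := by
    have h1 := (Lp.coeFn_le _ _).2 hb
    filter_upwards [h1, Lp.coeFn_abs (r n - ρ), Lp.coeFn_sub (r n) ρ] with t u1 u2 u3
    rw [u2, u3] at u1
    simpa using u1
  -- integrability
  have hasm : AEStronglyMeasurable a μ := Lp.aestronglyMeasurable _
  have hbsm : AEStronglyMeasurable b μ := Lp.aestronglyMeasurable _
  have hba : ∀ᵐ t ∂μ, ‖a t‖ ≤ 1 := by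
    filter_upwards [huni m] with t ht
    rw [Real.norm_eq_abs, ht]
  have hbb : ∀ᵐ t ∂μ, ‖b t‖ ≤ 1 := by
    filter_upwards [huni n] with t ht
    rw [Real.norm_eq_abs, ht]
  have Iaa : Integrable (fun t => a t * a t) μ := (hint (r m)).bdd_mul hasm hba
  have Iab : Integrable (fun t => a t * b t) μ := (hint (r n)).bdd_mul hasm hba
  have Iba : Integrable (fun t => b t * a t) μ := (hint (r m)).bdd_mul hbsm hbb
  have Ibb : Integrable (fun t => b t * b t) μ := (hint (r n)).bdd_mul hbsm hbb
  have Id : Integrable (fun t => a t - b t) μ := (hint (r m)).sub (hint (r n))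
  have hdsm : AEStronglyMeasurable (fun t => a t - b t) μ := hasm.sub hbsm
  have hdb : ∀ᵐ t ∂μ, ‖a t - b t‖ ≤ 2 := by
    filter_upwards [huni m, huni n] with t h1 h2
    rw [Real.norm_eq_abs]
    calc |a t - b t| ≤ |a t| + |b t| := abs_sub _ _
      _ = 2 := by rw [h1, h2]; norm_num
  have Idd : Integrable (fun t => (a t - b t) * (a t - b t)) μ := Id.bdd_mul hdsm hdb
  -- value computations
  have hvaa : ∫ t, a t * a t ∂μ = 1 := by
    have he : (fun t => a t * a t) =ᵐ[μ] fun _ => (1:ℝ) := by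
      filter_upwards [huni m] with t ht
      rw [← abs_mul_abs_self, ht]; norm_num
    rw [integral_congr_ae he, integral_const]
    simp
  have hvbb : ∫ t, b t * b t ∂μ = 1 := by
    have he : (fun t => b t * b t) =ᵐ[μ] fun _ => (1:ℝ) := by
      filter_upwards [huni n] with t ht
      rw [← abs_mul_abs_self, ht]; norm_num
    rw [integral_congr_ae he, integral_const]
    simp
  have hvab : ∫ t, a t * b t ∂μ = 0 := horth m n hmn
  have hvba : ∫ t, b t * a t ∂μ = 0 := horth n m (Ne.symm hmn)
  have hsub : ∫ t, (a t - b t) * (a t - b t) ∂μ = 2 := by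
    have hexp : (fun t => (a t - b t) * (a t - b t)) =
        fun t => a t * a t - (a t * b t + (b t * a t - b t * b t)) := by
      funext t; ring
    have e1 : ∫ t, (a t * a t - (a t * b t + (b t * a t - b t * b t))) ∂μ
        = (∫ t, a t * a t ∂μ) - ∫ t, (a t * b t + (b t * a t - b t * b t)) ∂μ :=
      integral_sub Iaa (Iab.add (Iba.sub Ibb))
    have e2 : ∫ t, (a t * b t + (b t * a t - b t * b t)) ∂μ
        = (∫ t, a t * b t ∂μ) + ∫ t, (b t * a t - b t * b t) ∂μ :=
      integral_add Iab (Iba.sub Ibb)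
    have e3 : ∫ t, (b t * a t - b t * b t) ∂μ
        = (∫ t, b t * a t ∂μ) - ∫ t, b t * b t ∂μ :=
      integral_sub Iba Ibb
    rw [hexp, e1, e2, e3, hvaa, hvbb, hvab, hvba]
    norm_num
  -- pointwise bound
  have hptw : ∀ᵐ t ∂μ, (a t - b t) * (a t - b t) ≤ 4 * (G : ℝ → ℝ) t := by
    filter_upwards [haae, hbae, huni m, huni n] with t h1 h2 h3 h4
    have habs : |a t - b t| ≤ 2 * (G : ℝ → ℝ) t := by
      calc |a t - b t| ≤ |a t - (ρ:ℝ→ℝ) t| + |(ρ:ℝ→ℝ) t - b t| := abs_sub_le _ _ _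
        _ = |a t - (ρ:ℝ→ℝ) t| + |b t - (ρ:ℝ→ℝ) t| := by rw [abs_sub_comm ((ρ:ℝ→ℝ) t)]
        _ ≤ (G:ℝ→ℝ) t + (G:ℝ→ℝ) t := add_le_add h1 h2
        _ = 2 * (G:ℝ→ℝ) t := by ring
    have habs2 : |a t - b t| ≤ 2 := by
      calc |a t - b t| ≤ |a t| + |b t| := abs_sub _ _
        _ = 2 := by rw [h3, h4]; norm_num
    calc (a t - b t) * (a t - b t) = |a t - b t| * |a t - b t| := (abs_mul_abs_self _).symm
      _ ≤ 2 * (2 * (G:ℝ→ℝ) t) := mul_le_mul habs2 habs (abs_nonneg _) (by norm_num)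
      _ = 4 * (G:ℝ→ℝ) t := by ring
  have hmono : (2:ℝ) ≤ ∫ t, 4 * (G : ℝ → ℝ) t ∂μ := by
    rw [← hsub]
    exact integral_mono_ae Idd ((hint G).const_mul 4) hptw
  rw [integral_const_mul] at hmono
  linarith


/-- **Lemma.** Let `(r_n)` be an orthonormal sequence of unimodular functions in
`L∞[0,1]` (`|r_n| = 1` a.e., `∫ r_m r_n = 0` for `m ≠ n`). If a subnet
`(r_{φ(β)})` order converges to `ρ` in `L∞[0,1]`, then `∫ ρ² dμ = 0`; this is
impossible, so no subnet of `(r_n)` order converges. -/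
theorem orthonormal_unimodular_no_order_convergent_subnet
    (μ : Measure ℝ) (hμ : μ = MeasureTheory.volume.restrict (Set.Icc (0:ℝ) 1))
    (r : ℕ → MeasureTheory.Lp ℝ ⊤ μ)
    (huni : ∀ n : ℕ, ∀ᵐ t ∂μ, |(r n : ℝ → ℝ) t| = 1)
    (horth : ∀ m n : ℕ, m ≠ n →
      (∫ t, (r m : ℝ → ℝ) t * (r n : ℝ → ℝ) t ∂μ) = 0) :
    (∀ (B : Type) (_ : Preorder B), IsDirectedIx B →
      ∀ φ : B → ℕ, IsSubnet φ →
        ∀ ρ : MeasureTheory.Lp ℝ ⊤ μ, OConvNet (fun β => r (φ β)) ρ →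
          (∫ t, (ρ : ℝ → ℝ) t * (ρ : ℝ → ℝ) t ∂μ) = 0) ∧
    ¬ ∃ (B : Type) (_ : Preorder B), IsDirectedIx B ∧
        ∃ φ : B → ℕ, IsSubnet φ ∧
          ∃ ρ : MeasureTheory.Lp ℝ ⊤ μ, OConvNet (fun β => r (φ β)) ρ := by
  subst hμ
  haveI : IsProbabilityMeasure (MeasureTheory.volume.restrict (Set.Icc (0:ℝ) 1)) := by
    constructor
    rw [Measure.restrict_apply_univ, Real.volume_Icc]
    norm_num
  have key : ¬ ∃ (B : Type) (_ : Preorder B), IsDirectedIx B ∧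
      ∃ φ : B → ℕ, IsSubnet φ ∧
        ∃ ρ : MeasureTheory.Lp ℝ ⊤ (MeasureTheory.volume.restrict (Set.Icc (0:ℝ) 1)),
          OConvNet (fun β => r (φ β)) ρ := by
    rintro ⟨B, instB, hB, φ, hφ, ρ, hconv⟩
    obtain ⟨Γ, instΓ, hΓ, g, hanti, hglb, hdom⟩ := hconv
    refine @aux_no_net _ _ Γ instΓ hΓ g hanti hglb ?_
    intro γ
    obtain ⟨β₀, hβ₀⟩ := hdom γ
    obtain ⟨β₂, hβ₂⟩ := hφ.2 (φ β₀ + 1)  -- cofinality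
    obtain ⟨β₃, h3a, h3b⟩ := hB.2 β₀ β₂
    have hmn : φ β₀ ≠ φ β₃ :=
      Nat.ne_of_lt (lt_of_lt_of_le (Nat.lt_succ_self _) (hβ₂.trans (hφ.1 h3b)))
    exact aux_half_le _ r huni horth hmn ρ (g γ) (hβ₀ β₀ le_rfl) (hβ₀ β₃ h3a)
  refine ⟨?_, key⟩
  intro B instB hB φ hφ ρ hconv
  exact absurd ⟨B, instB, hB, φ, hφ, ρ, hconv⟩ key
end

section
/- Let F be the Riesz space of bounded real functions on ℝ with countable support and E = ℝ·1 ⊕ F ⊆ ℝ^ℝ. Then the identity operator on (E,|·|,E) is sequentially p-compact: every order bounded sequence (x_n) in E has a subsequence that order converges in E. -/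
open Filter MeasureTheory Set Topology

/-- **Example.** The identity on `(E,|·|,E)`, with `E = ℝ·1 ⊕ F`, is
sequentially `p`-compact: every order bounded sequence in `E` has a subsequence
that order converges in `E`. -/
theorem identity_sequentially_pCompact_on_Espace
    (x : ℕ → (ℝ → ℝ)) (hx : ∀ n, x n ∈ Espace)
    (hbdd : ∃ b ∈ Espace, ∀ n, |x n| ≤ b) :
    ∃ φ : ℕ → ℕ, StrictMono φ ∧
      ∃ l : ℝ → ℝ, OConvSeqIn Espace (fun k => x (φ k)) l := by
  classical
  obtain ⟨b, ⟨cb, fb, ⟨⟨Cb, hCb⟩, hfbc⟩, hbeq⟩, hb⟩ := hbdd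
  choose c f hf hxeq using hx
  set T : Set ℝ := (⋃ n, {t | f n t ≠ 0}) ∪ {t | fb t ≠ 0} with hTdef
  have hTc : T.Countable := (Set.countable_iUnion fun n => (hf n).2).union hfbc
  have hxoff : ∀ n t, t ∉ T → x n t = c n := by
    intro n t ht
    have hf0 : f n t = 0 := by
      by_contra h
      exact ht (Or.inl (Set.mem_iUnion.2 ⟨n, h⟩))
    simp [hxeq n, hf0]
  have hboff : ∀ t, t ∉ T → b t = cb := by
    intro t ht
    have hf0 : fb t = 0 := by
      by_contra h
      exact ht (Or.inr h)
    simp [hbeq, hf0]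
  have hxb : ∀ n t, |x n t| ≤ b t := fun n t => hb n t
  have hbbd : ∀ t, b t ≤ cb + Cb := by
    intro t
    have := (abs_le.1 (hCb t)).2
    simp only [hbeq]; linarith
  have hxbd : ∀ n t, |x n t| ≤ cb + Cb := fun n t => (hxb n t).trans (hbbd t)
  have hcc : (0:ℝ) ≤ cb + Cb := (abs_nonneg (x 0 0)).trans (hxbd 0 0)
  -- pick a point outside T
  obtain ⟨t₀, ht₀⟩ : ∃ t : ℝ, t ∉ T := by
    by_contra h
    push_neg at h
    have : (Set.univ : Set ℝ).Countable := by
      have : T = Set.univ := Set.eq_univ_of_forall h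
      rwa [this] at hTc
    exact Cardinal.not_countable_real this
  -- diagonal extraction via compactness of a countable product
  set T' : Set ℝ := insert t₀ T with hT'def
  have hT'c : T'.Countable := hTc.insert t₀
  haveI : Countable T' := hT'c.to_subtype
  set K : Set (T' → ℝ) := Set.pi Set.univ (fun _ => Set.Icc (-(cb + Cb)) (cb + Cb)) with hKdef
  have hK : IsCompact K := isCompact_univ_pi fun _ => isCompact_Icc
  have hmem : ∀ n, (fun t : T' => x n t) ∈ K := by
    intro n t _
    exact abs_le.1 (hxbd n t)
  obtain ⟨g, hgK, φ, hφ, hconvg⟩ := hK.tendsto_subseq hmem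
  have hconv' : ∀ t : T', Tendsto (fun k => x (φ k) t) atTop (𝓝 (g t)) := by
    intro t
    exact (tendsto_pi_nhds.1 hconvg) t
  set cInf0 : ℝ := g ⟨t₀, Set.mem_insert t₀ T⟩ with hcinf
  set l : ℝ → ℝ := fun t => if h : t ∈ T then g ⟨t, Set.mem_insert_of_mem t₀ h⟩ else cInf0
    with hldef
  have hptconv : ∀ t : ℝ, Tendsto (fun k => x (φ k) t) atTop (𝓝 (l t)) := by
    intro t
    by_cases h : t ∈ T
    · have := hconv' ⟨t, Set.mem_insert_of_mem t₀ h⟩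
      simpa [hldef, h] using this
    · have h0 := hconv' ⟨t₀, Set.mem_insert t₀ T⟩
      have heq : (fun k => x (φ k) t) = fun k => x (φ k) t₀ := by
        funext k
        rw [hxoff _ _ h, hxoff _ _ ht₀]
      rw [heq]
      simpa [hldef, h, hcinf] using h0
  have hlbd : ∀ t, |l t| ≤ b t := by
    intro t
    have h1 : Tendsto (fun k => |x (φ k) t|) atTop (𝓝 (|l t|)) :=
      (continuous_abs.tendsto _).comp (hptconv t)
    exact le_of_tendsto h1 (Eventually.of_forall fun k => hxb _ t)
  have hlbd' : ∀ t, |l t| ≤ cb + Cb := fun t => (hlbd t).trans (hbbd t)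
  have hloff : ∀ t, t ∉ T → l t = cInf0 := by
    intro t ht; simp [hldef, ht]
  have hlE : l ∈ Espace := by
    refine ⟨cInf0, fun t => l t - cInf0, ⟨⟨cb + Cb + |cInf0|, fun t => ?_⟩, ?_⟩, ?_⟩
    · calc |l t - cInf0| ≤ |l t| + |cInf0| := abs_sub _ _
        _ ≤ cb + Cb + |cInf0| := by linarith [hlbd' t]
    · apply hTc.mono
      intro t ht
      by_contra h
      exact ht (by simp [hloff t h])
    · funext t; ring
  -- the dominating sequence
  set G : ℕ → ℝ → ℝ := fun m t => ⨆ k, |x (φ (k + m)) t - l t| with hGdef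
  have hterm : ∀ m k t, |x (φ (k + m)) t - l t| ≤ 2 * (cb + Cb) := by
    intro m k t
    calc |x (φ (k + m)) t - l t| ≤ |x (φ (k + m)) t| + |l t| := abs_sub _ _
      _ ≤ 2 * (cb + Cb) := by linarith [hxbd (φ (k + m)) t, hlbd' t]
  have hBdd : ∀ m t, BddAbove (Set.range fun k => |x (φ (k + m)) t - l t|) := by
    intro m t
    exact ⟨2 * (cb + Cb), by rintro y ⟨k, rfl⟩; exact hterm m k t⟩
  have hGle : ∀ m t, G m t ≤ 2 * (cb + Cb) := fun m t => ciSup_le fun k => hterm m k t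
  have hG0 : ∀ m t, 0 ≤ G m t := fun m t =>
    (abs_nonneg _).trans (le_ciSup (hBdd m t) 0)
  have hGanti : ∀ m m', m ≤ m' → ∀ t, G m' t ≤ G m t := by
    intro m m' hmm t
    refine ciSup_le fun k => ?_
    have hidx : k + m' = (k + (m' - m)) + m := by omega
    rw [hidx]
    exact le_ciSup (hBdd m t) (k + (m' - m))
  have hGoff : ∀ m t, t ∉ T → G m t = G m t₀ := by
    intro m t ht
    have heq : (fun k => |x (φ (k + m)) t - l t|) = fun k => |x (φ (k + m)) t₀ - l t₀| := by
      funext k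
      rw [hxoff _ _ ht, hxoff _ _ ht₀, hloff t ht, hloff t₀ ht₀]
    simp only [hGdef, heq]
  have hGE : ∀ m, G m ∈ Espace := by
    intro m
    refine ⟨G m t₀, fun t => G m t - G m t₀, ⟨⟨4 * (cb + Cb), fun t => ?_⟩, ?_⟩, ?_⟩
    · have h1 := hGle m t; have h2 := hG0 m t
      have h3 := hGle m t₀; have h4 := hG0 m t₀
      have habs : |G m t - G m t₀| ≤ 4 * (cb + Cb) := by
        rw [abs_le]; constructor <;> linarith
      simpa using habs
    · apply hTc.mono
      intro t ht
      by_contra h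
      exact ht (by simp [hGoff m t h])
    · funext t; ring
  -- assemble
  refine ⟨φ, hφ, l, hlE, ℕ, inferInstance,
    ⟨⟨0⟩, fun a b' => ⟨max a b', le_max_left _ _, le_max_right _ _⟩⟩,
    G, hGE, ?_, fun m t => hG0 m t, ?_, ?_⟩
  · intro m m' hmm t
    exact hGanti m m' hmm t
  · -- infimum relative to Espace is 0
    intro w _ hw
    intro t
    have hwt : ∀ ε : ℝ, 0 < ε → w t ≤ ε := by
      intro ε hε
      have := (Metric.tendsto_atTop.1 (hptconv t)) ε hε
      obtain ⟨m, hm⟩ := this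
      have hGm : G m t ≤ ε := by
        refine ciSup_le fun k => ?_
        have := hm (k + m) (by omega)
        rw [Real.dist_eq] at this
        exact this.le
      exact (hw m t).trans hGm
    by_contra hcon
    push_neg at hcon
    have h0 : (0 : ℝ → ℝ) t = 0 := rfl
    rw [h0] at hcon
    have := hwt (w t / 2) (by linarith)
    linarith
  · -- eventual domination
    intro m
    refine ⟨m, fun k hk t => ?_⟩
    have hidx : k = (k - m) + m := by omega
    have : |x (φ k) t - l t| ≤ G m t := by
      rw [hidx]
      exact le_ciSup (hBdd m t) (k - m)
    simpa using this
end

section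
/- Let F be the Riesz space of bounded real functions on ℝ with countable support and E = ℝ·1 ⊕ F ⊆ ℝ^ℝ. Let 𝓕 be the collection of finite subsets of ℝ₊ directed by inclusion and g_A = 1_A for A ∈ 𝓕. Then the net (g_A) is order bounded in E but no subnet of (g_A) order converges in E; in particular the identity on (E,|·|,E) is not rp-compact. -/
open Filter MeasureTheory Set

open Classical in
/-- The indicator function of a finite set `s` of nonnegative reals. -/
noncomputable def finIndicator (s : Finset {x : ℝ // 0 ≤ x}) : ℝ → ℝ :=
  fun t => if ∃ h : 0 ≤ t, (⟨t, h⟩ : {x : ℝ // 0 ≤ x}) ∈ s then 1 else 0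


lemma finIndicator_eq_one {s : Finset {x : ℝ // 0 ≤ x}} {t : ℝ} (h : 0 ≤ t)
    (hm : (⟨t, h⟩ : {x : ℝ // 0 ≤ x}) ∈ s) : finIndicator s t = 1 := by
  simp only [finIndicator]
  rw [if_pos ⟨h, hm⟩]

lemma finIndicator_of_neg {s : Finset {x : ℝ // 0 ≤ x}} {t : ℝ} (h : t < 0) :
    finIndicator s t = 0 := by
  simp only [finIndicator]
  rw [if_neg]
  rintro ⟨h0, -⟩
  exact absurd h0 (not_le.2 h)

lemma exists_nonneg_zero {f : ℝ → ℝ} (hf : Set.Countable {x | f x ≠ 0}) :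
    ∃ x, 0 ≤ x ∧ f x = 0 := by
  by_contra h
  push_neg at h
  have hsub : Set.Ici (0:ℝ) ⊆ {x | f x ≠ 0} := fun x hx => h x hx
  have h0 : volume (Set.Ici (0:ℝ)) = 0 :=
    measure_mono_null hsub (hf.measure_zero _)
  rw [Real.volume_Ici] at h0
  exact absurd h0 (by simp)

lemma exists_neg_zero {f : ℝ → ℝ} (hf : Set.Countable {x | f x ≠ 0}) :
    ∃ x, x < 0 ∧ f x = 0 := by
  by_contra h
  push_neg at h
  have hsub : Set.Iio (0:ℝ) ⊆ {x | f x ≠ 0} := fun x hx => h x hx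
  have h0 : volume (Set.Iio (0:ℝ)) = 0 :=
    measure_mono_null hsub (hf.measure_zero _)
  rw [Real.volume_Iio] at h0
  exact absurd h0 (by simp)

lemma key_bound {B : Type} [Preorder B]
    (hdir : ∀ a b : B, ∃ c, a ≤ c ∧ b ≤ c)
    {φ : B → Finset {x : ℝ // 0 ≤ x}} (hmono : Monotone φ)
    (hcof : ∀ a, ∃ b, a ≤ φ b)
    {l h : ℝ → ℝ} (hev : ∃ β₀, ∀ β ≥ β₀, |finIndicator (φ β) - l| ≤ h)
    {x : ℝ} :
    (0 ≤ x → |1 - l x| ≤ h x) ∧ (x < 0 → |l x| ≤ h x) := by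
  obtain ⟨β₀, hβ₀⟩ := hev
  constructor
  · intro hx
    obtain ⟨b, hb⟩ := hcof {⟨x, hx⟩}
    obtain ⟨β, hβ1, hβ2⟩ := hdir β₀ b
    have hmem : (⟨x, hx⟩ : {x : ℝ // 0 ≤ x}) ∈ φ β :=
      hmono hβ2 (hb (Finset.mem_singleton_self _))
    have h2 := (hβ₀ β hβ1) x
    simp only [Pi.abs_apply, Pi.sub_apply, finIndicator_eq_one hx hmem] at h2
    exact h2
  · intro hx
    have h2 := (hβ₀ β₀ le_rfl) x
    simp only [Pi.abs_apply, Pi.sub_apply, finIndicator_of_neg hx] at h2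
    simpa using h2

lemma half_le_cases (c : ℝ) : (1/2:ℝ) ≤ |1 - c| ∨ (1/2:ℝ) ≤ |c| := by
  by_cases h : (1/2:ℝ) ≤ |c|
  · exact Or.inr h
  · push_neg at h
    rw [abs_lt] at h
    left
    calc (1/2:ℝ) ≤ 1 - c := by linarith [h.2]
    _ ≤ |1 - c| := le_abs_self _

/-- **Example.** The net `(1_A)_A`, indexed by the finite subsets of `ℝ₊`
directed by inclusion, is order bounded in `E = ℝ·1 ⊕ F` but no subnet of it
order converges in `E` — nor does any subnet relatively uniformly converge —
so the identity on `(E,|·|,E)` is not (`rp`-)compact. -/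
theorem indicator_net_no_order_convergent_subnet :
    (∀ s : Finset {x : ℝ // 0 ≤ x}, finIndicator s ∈ Espace ∧
        0 ≤ finIndicator s ∧ finIndicator s ≤ fun _ => (1:ℝ)) ∧
    (∀ (B : Type) (_ : Preorder B), IsDirectedIx B →
      ∀ φ : B → Finset {x : ℝ // 0 ≤ x}, IsSubnet φ →
        (¬ ∃ l, OConvNetIn Espace (fun β => finIndicator (φ β)) l) ∧
        ¬ ∃ l ∈ Espace, ∃ e ∈ Espace, 0 ≤ e ∧
            ∀ ε : ℝ, 0 < ε → ∃ β₀, ∀ β ≥ β₀,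
              |finIndicator (φ β) - l| ≤ ε • e) := by
  constructor
  · -- order boundedness
    intro s
    refine ⟨⟨0, finIndicator s, ⟨⟨1, fun x => ?_⟩, ?_⟩, by funext x; simp⟩, ?_, ?_⟩
    · simp only [finIndicator]
      split_ifs <;> norm_num
    · refine Set.Countable.mono ?_ (s.image (fun p => (p.1 : ℝ))).countable_toSet
      intro x hx
      simp only [Set.mem_setOf_eq, finIndicator] at hx
      split_ifs at hx with hcond
      · obtain ⟨h0, hm⟩ := hcond
        simp only [Finset.coe_image, Set.mem_image, Finset.mem_coe]
        exact ⟨⟨x, h0⟩, hm, rfl⟩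
      · exact absurd rfl hx
    · intro x
      simp only [finIndicator, Pi.zero_apply]
      split_ifs <;> norm_num
    · intro x
      simp only [finIndicator]
      split_ifs <;> norm_num
  · intro B instB hB φ hφ
    obtain ⟨hne, hdir⟩ := hB
    obtain ⟨hmono, hcof⟩ := hφ
    constructor
    · rintro ⟨l, hlE, Γ, instΓ, hΓ, g, hgE, hganti, hgpos, hinf, hgev⟩
      obtain ⟨c, f, hfF, hlc⟩ := hlE
      have hfc : Set.Countable {x | f x ≠ 0} := hfF.2
      obtain ⟨x0, hx0, hfx0⟩ := exists_nonneg_zero hfc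
      obtain ⟨x1, hx1, hfx1⟩ := exists_neg_zero hfc
      have hlx0 : l x0 = c := by rw [hlc]; simp [hfx0]
      have hlx1 : l x1 = c := by rw [hlc]; simp [hfx1]
      obtain ⟨xs, hs⟩ : ∃ xs : ℝ, ∀ γ, (1/2:ℝ) ≤ g γ xs := by
        rcases half_le_cases c with hc | hc
        · refine ⟨x0, fun γ => ?_⟩
          have hk := (key_bound hdir hmono hcof (hgev γ)).1 hx0
          rw [hlx0] at hk
          linarith
        · refine ⟨x1, fun γ => ?_⟩
          have hk := (key_bound hdir hmono hcof (hgev γ)).2 hx1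
          rw [hlx1] at hk
          linarith
      set w : ℝ → ℝ := fun x => if x = xs then (1/2:ℝ) else 0 with hw
      have hwE : w ∈ Espace := by
        refine ⟨0, w, ⟨⟨1/2, fun x => ?_⟩, ?_⟩, by funext x; simp⟩
        · simp only [hw]
          split_ifs <;> norm_num [abs_of_nonneg]
        · refine Set.Countable.mono ?_ (Set.countable_singleton xs)
          intro x hx
          simp only [Set.mem_setOf_eq, hw] at hx
          by_contra hne'
          rw [Set.mem_singleton_iff] at hne'
          rw [if_neg hne'] at hx
          exact hx rfl
      have hwle : ∀ γ, w ≤ g γ := by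
        intro γ x
        by_cases hxx : x = xs
        · subst hxx
          simpa [hw] using hs γ
        · simp only [hw, if_neg hxx]
          exact hgpos γ x
      have hcon := hinf w hwE hwle xs
      simp only [hw, if_pos rfl, Pi.zero_apply] at hcon
      norm_num at hcon
    · rintro ⟨l, hlE, e, heE, hepos, hconv⟩
      obtain ⟨c, f, hfF, hlc⟩ := hlE
      have hfc : Set.Countable {x | f x ≠ 0} := hfF.2
      obtain ⟨x0, hx0, hfx0⟩ := exists_nonneg_zero hfc
      obtain ⟨x1, hx1, hfx1⟩ := exists_neg_zero hfc
      have hlx0 : l x0 = c := by rw [hlc]; simp [hfx0]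
      have hlx1 : l x1 = c := by rw [hlc]; simp [hfx1]
      have hkey : ∃ xs : ℝ, ∀ ε : ℝ, 0 < ε → (1/2:ℝ) ≤ ε * e xs := by
        rcases half_le_cases c with hc | hc
        · refine ⟨x0, fun ε hε => ?_⟩
          have hk := (key_bound hdir hmono hcof (hconv ε hε)).1 hx0
          rw [hlx0] at hk
          simp only [Pi.smul_apply, smul_eq_mul] at hk
          linarith
        · refine ⟨x1, fun ε hε => ?_⟩
          have hk := (key_bound hdir hmono hcof (hconv ε hε)).2 hx1
          rw [hlx1] at hk
          simp only [Pi.smul_apply, smul_eq_mul] at hk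
          linarith
      obtain ⟨xs, hxs⟩ := hkey
      have ha : (0:ℝ) ≤ e xs := hepos xs
      have hε : (0:ℝ) < 1 / (2 * (e xs + 1)) := by positivity
      have := hxs _ hε
      have hlt : (1 / (2 * (e xs + 1))) * e xs < 1/2 := by
        rw [div_mul_eq_mul_div, one_mul, div_lt_iff₀ (by linarith)]
        linarith
      linarith
end

section
/- The operator T : L¹[0,2π] → c₀, (T f)_n = ∫₀^{2π} f(t) sin(nt) dt, is not sequentially order compact: the sequence u_n(t) = sin(nt) is order bounded in L¹[0,2π] but (T u_n) = (π e_n) has no order convergent subsequence in c₀. -/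
open Filter MeasureTheory Set

open Real intervalIntegral in
lemma int_cos_int (k : ℤ) (hk : k ≠ 0) :
    ∫ t in (0:ℝ)..(2*π), Real.cos (k * t) = 0 := by
  have hkR : (k:ℝ) ≠ 0 := Int.cast_ne_zero.mpr hk
  rw [intervalIntegral.integral_comp_mul_left Real.cos hkR]
  rw [integral_cos, show (k:ℝ) * (2*π) = ((2*k : ℤ):ℝ) * π by push_cast; ring,
    Real.sin_int_mul_pi]
  simp

open Real intervalIntegral in
lemma key_int (a b : ℕ) (ha : a ≠ 0) :
    ∫ t in (0:ℝ)..(2*π), Real.sin (a*t) * Real.sin (b*t)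
      = if b = a then π else 0 := by
  have heq : ∀ t : ℝ, Real.sin (a*t) * Real.sin (b*t)
      = (Real.cos (((a - b : ℤ):ℝ) * t) - Real.cos (((a + b : ℤ):ℝ) * t)) / 2 := by
    intro t
    rw [Real.cos_sub_cos]
    push_cast
    have h1 : ((↑a - ↑b)*t + (↑a + ↑b)*t)/2 = (a:ℝ)*t := by ring
    have h2 : ((↑a - ↑b)*t - (↑a + ↑b)*t)/2 = -((b:ℝ)*t) := by ring
    rw [h1, h2, Real.sin_neg]; ring
  simp_rw [heq]
  rw [intervalIntegral.integral_div, intervalIntegral.integral_sub]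
  · rw [int_cos_int (a+b : ℤ) (by omega)]
    by_cases hb : b = a
    · subst hb
      rw [show ((b:ℤ) - b) = 0 by ring]
      simp [two_mul]
    · rw [int_cos_int (a - b : ℤ) (by omega)]
      simp [hb]
  · exact (Real.continuous_cos.comp (by continuity)).intervalIntegrable _ _
  · exact (Real.continuous_cos.comp (by continuity)).intervalIntegrable _ _

set_option maxHeartbeats 800000 in
open Real in
/-- **Remark.** The operator `T : L¹[0,2π] → c₀`,
`(T f)_n = ∫₀^{2π} f(t) sin(nt) dt`, is not sequentially order compact: the
sequence `u_n(t) = sin((n+1)t)` is order bounded in `L¹[0,2π]`, its image is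
`(π e_{n+1})`, and no subsequence of the image order converges in `c₀`. -/
theorem sine_operator_not_sequentially_order_compact
    (μ : Measure ℝ) (hμ : μ = MeasureTheory.volume.restrict (Set.Icc (0:ℝ) (2*π))) :
    (∀ (n : ℕ) (t : ℝ), |Real.sin ((n + 1 : ℕ) * t)| ≤ 1) ∧
    (∀ n : ℕ,
      (fun m : ℕ => ∫ t, Real.sin ((n + 1 : ℕ) * t) * Real.sin (m * t) ∂μ) =
        fun m : ℕ => if m = n + 1 then π else 0) ∧
    ∀ ψ : ℕ → ℕ, StrictMono ψ →
      ¬ ∃ l : ℕ → ℝ,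
        OConvSeqIn {b : ℕ → ℝ | Filter.Tendsto b Filter.atTop (nhds 0)}
          (fun k => fun m : ℕ =>
            ∫ t, Real.sin ((ψ k + 1 : ℕ) * t) * Real.sin (m * t) ∂μ) l := by
  have hint : ∀ (n m : ℕ),
      (∫ t, Real.sin ((n + 1 : ℕ) * t) * Real.sin (m * t) ∂μ)
        = if m = n + 1 then π else 0 := by
    intro n m
    rw [hμ, MeasureTheory.integral_Icc_eq_integral_Ioc,
      ← intervalIntegral.integral_of_le (by positivity : (0:ℝ) ≤ 2*π)]
    exact key_int (n+1) m (by omega)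
  refine ⟨fun n t => Real.abs_sin_le_one _, fun n => funext fun m => hint n m, ?_⟩
  intro ψ hψ ⟨l, hl, Γ, _, hdir, g, hgS, _, _, _, hconv⟩
  obtain ⟨γ⟩ := hdir.1
  obtain ⟨α₀, hα₀⟩ := hconv γ
  -- the function g γ + |l| tends to 0
  have hl0 : Filter.Tendsto l Filter.atTop (nhds 0) := hl
  have hg0 : Filter.Tendsto (g γ) Filter.atTop (nhds 0) := hgS γ
  have hsum : Filter.Tendsto (fun m => g γ m + |l m|) Filter.atTop (nhds 0) := by
    have := hg0.add ((hl0.abs).congr (fun m => rfl))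
    simpa using this
  have htend : Filter.Tendsto (fun k => ψ k + 1) Filter.atTop Filter.atTop :=
    Filter.tendsto_atTop_mono (fun k => (hψ.id_le k).trans (Nat.le_succ _)) Filter.tendsto_id
  have hcomp : Filter.Tendsto (fun k => g γ (ψ k + 1) + |l (ψ k + 1)|)
      Filter.atTop (nhds 0) := hsum.comp htend
  have hev : ∀ᶠ k in Filter.atTop, g γ (ψ k + 1) + |l (ψ k + 1)| < π :=
    hcomp.eventually_lt_const Real.pi_pos
  obtain ⟨K, hK⟩ := Filter.eventually_atTop.mp hev
  set k := max K α₀ with hk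
  have h1 := hα₀ k (le_max_right _ _)
  have h2 := hK k (le_max_left _ _)
  have hval : (∫ t, Real.sin ((ψ k + 1 : ℕ) * t) * Real.sin (((ψ k + 1 : ℕ)) * t) ∂μ) = π := by
    rw [hint (ψ k) (ψ k + 1)]; simp
  have h3 := h1 (ψ k + 1)
  simp only [Pi.sub_apply, Pi.abs_apply] at h3
  rw [hval] at h3
  have : π ≤ g γ (ψ k + 1) + |l (ψ k + 1)| := by
    have habs : |π - l (ψ k + 1)| ≤ g γ (ψ k + 1) := h3
    have := abs_sub_abs_le_abs_sub π (l (ψ k + 1))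
    rw [abs_of_pos Real.pi_pos] at this
    linarith
  linarith
end
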